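/- arXiv:2512.01175 — 4 statements merged into one kernel-verified Lean document; each statement's English description precedes it below -/
import Mathlib

section
/- Let G be a finite connected chordal graph. Then any two distinct minimal vertex separators of G are disjoint if and only if G contains no induced subgraph isomorphic to the gem and no induced subgraph isomorphic to the dart. -/
/-- A chord of a closed walk: an edge of the graph between two vertices of the walk
that is not an edge of the walk. -/
def SimpleGraph.HasChord {V : Type*} (G : SimpleGraph V) {v : V} (w : G.Walk v v) : Prop :=
  ∃ x y, x ∈ w.support ∧ y ∈ w.support ∧ G.Adj x y ∧ s(x, y) ∉ w.edges

/-- A graph is chordal if every cycle of length at least 4 has a chord. -/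
def SimpleGraph.IsChordal {V : Type*} (G : SimpleGraph V) : Prop :=
  ∀ (v : V) (w : G.Walk v v), w.IsCycle → 4 ≤ w.length → G.HasChord w

/-- `S` is a `uv`-separator: `u, v ∉ S` and every walk from `u` to `v` meets `S`
(equivalently `u` and `v` lie in distinct components of `G - S`). -/
def SimpleGraph.IsUVSeparator {V : Type*} (G : SimpleGraph V) (u v : V) (S : Set V) : Prop :=
  u ∉ S ∧ v ∉ S ∧ ∀ p : G.Walk u v, ∃ x ∈ p.support, x ∈ S

/-- A minimal vertex separator: a `uv`-separator, for some nonadjacent pair `u ≠ v`,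
no proper subset of which is a `uv`-separator. -/
def SimpleGraph.IsMinVtxSep {V : Type*} (G : SimpleGraph V) (S : Set V) : Prop :=
  ∃ u v, u ≠ v ∧ ¬ G.Adj u v ∧ G.IsUVSeparator u v S ∧
    ∀ S' ⊂ S, ¬ G.IsUVSeparator u v S'

/-- The gem graph: a path 0-1-2-3 together with a vertex 4 adjacent to all of 0,1,2,3. -/
def gemGraph : SimpleGraph (Fin 5) :=
  SimpleGraph.fromRel (fun i j =>
    (i.val, j.val) ∈ [(0,1), (1,2), (2,3), (4,0), (4,1), (4,2), (4,3)])

/-- The dart graph on {0,1,2,3,4} = {a,b,c,d,e} with edges ab, ac, bc, bd, cd, ce. -/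
def dartGraph : SimpleGraph (Fin 5) :=
  SimpleGraph.fromRel (fun i j =>
    (i.val, j.val) ∈ [(0,1), (0,2), (1,2), (1,3), (2,3), (2,4)])

open SimpleGraph

section Aux
variable {V : Type*} {G : SimpleGraph V} {S : Set V} {u v s t x y : V}


/-- `z` is reachable from `u` by a walk avoiding `S` entirely. -/
def Reaches (G : SimpleGraph V) (S : Set V) (u z : V) : Prop :=
  ∃ p : G.Walk u z, ∀ w ∈ p.support, w ∉ S

lemma reaches_self (hu : u ∉ S) : Reaches G S u u :=
  ⟨Walk.nil, by simp [hu]⟩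

lemma Reaches.notMem {z : V} (h : Reaches G S u z) : z ∉ S :=
  h.choose_spec z h.choose.end_mem_support

lemma Reaches.start_notMem {z : V} (h : Reaches G S u z) : u ∉ S :=
  h.choose_spec u h.choose.start_mem_support

lemma Reaches.adj {z w : V} (h : Reaches G S u z) (ha : G.Adj z w) (hw : w ∉ S) :
    Reaches G S u w := by
  obtain ⟨p, hp⟩ := h
  refine ⟨p.append (Walk.cons ha Walk.nil), ?_⟩
  intro a hA
  rw [Walk.support_append, List.mem_append] at hA
  rcases hA with hA | hA
  · exact hp a hA
  · simp at hA; subst hA; exact hw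

lemma Reaches.walk {z₁ z₂ : V} (h1 : Reaches G S u z₁) (h2 : Reaches G S u z₂) :
    ∃ p : G.Walk z₁ z₂, ∀ w ∈ p.support, w ∉ S := by
  obtain ⟨p, hp⟩ := h1
  obtain ⟨q, hq⟩ := h2
  refine ⟨p.reverse.append q, ?_⟩
  intro a hA
  rw [Walk.support_append, List.mem_append] at hA
  rcases hA with hA | hA
  · exact hp a (by rwa [Walk.support_reverse, List.mem_reverse] at hA)
  · exact hq a (List.mem_of_mem_tail hA)

lemma sep_not_reaches (hsep : G.IsUVSeparator u v S) : ¬ Reaches G S u v := by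
  rintro ⟨p, hp⟩
  obtain ⟨a, ha, haS⟩ := hsep.2.2 p
  exact hp a ha haS

lemma SimpleGraph.IsUVSeparator.symm (h : G.IsUVSeparator u v S) : G.IsUVSeparator v u S := by
  refine ⟨h.2.1, h.1, fun p => ?_⟩
  obtain ⟨a, ha, haS⟩ := h.2.2 p.reverse
  exact ⟨a, by rwa [Walk.support_reverse, List.mem_reverse] at ha, haS⟩

lemma Reaches.of_mem_support {ps q z : V} (hps : Reaches G S u ps) (m : G.Walk ps q)
    (hm : ∀ w ∈ m.support, w ∉ S) (hz : z ∈ m.support) : Reaches G S u z := by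
  classical
  obtain ⟨p, hp⟩ := hps
  refine ⟨p.append (m.takeUntil z hz), ?_⟩
  intro a hA
  rw [Walk.support_append, List.mem_append] at hA
  rcases hA with hA | hA
  · exact hp a hA
  · exact hm a (m.support_takeUntil_subset hz (List.mem_of_mem_tail hA))

/-- every vertex of a minimal separator has a neighbor in the `u`-side component. -/
lemma exists_nbr_in_comp (hsep : G.IsUVSeparator u v S)
    (hmin : ∀ S' ⊂ S, ¬ G.IsUVSeparator u v S') (hs : s ∈ S) :
    ∃ z, Reaches G S u z ∧ G.Adj z s := by
  have hsub : S \ {s} ⊂ S := Set.sdiff_singleton_ssubset.mpr hs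
  have hns := hmin _ hsub
  rw [SimpleGraph.IsUVSeparator] at hns
  push_neg at hns
  obtain ⟨p, hp⟩ := hns (fun h => hsep.1 h.1) (fun h => hsep.2.1 h.1)
  obtain ⟨d, hd, h1, h2⟩ := p.exists_boundary_dart {z | Reaches G S u z}
    (reaches_self hsep.1) (sep_not_reaches hsep)
  have hdS : d.snd ∈ S := by
    by_contra h
    exact h2 (Reaches.adj h1 d.adj h)
  have hds : d.snd = s := by
    have h3 := hp d.snd (p.dart_snd_mem_support_of_mem_darts hd)
    by_contra h4
    exact h3 ⟨hdS, h4⟩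
  exact ⟨d.fst, h1, hds ▸ d.adj⟩
lemma edge_mem_of_length_one {a b : V} (p : G.Walk a b) (h : p.length = 1) :
    s(a, b) ∈ p.edges := by
  cases p with
  | nil => simp at h
  | cons h' q =>
    have : q.length = 0 := by simpa using h
    have := SimpleGraph.Walk.eq_of_length_eq_zero this
    subst this
    simp

lemma shortcut [DecidableEq V] {p : G.Walk s t} (hp : p.IsPath) (hx : x ∈ p.support)
    (hy : y ∈ p.support) (ha : G.Adj x y) (he : s(x, y) ∉ p.edges) :
    ∃ q : G.Walk s t, q.IsPath ∧ (∀ z ∈ q.support, z ∈ p.support) ∧ q.length < p.length ∧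
      (q.length ≤ 1 → s(x, y) = s(s, t)) := by
  have hxy : x ≠ y := ha.ne
  by_cases hc : y ∈ (p.dropUntil x hx).support
  · -- x comes before y
    set p1 := p.takeUntil x hx with hp1
    set p2 := p.dropUntil x hx with hp2
    set p3 := p2.takeUntil y hc with hp3
    set p4 := p2.dropUntil y hc with hp4
    have hps : p1.append p2 = p := p.take_spec hx
    have hps2 : p3.append p4 = p2 := p2.take_spec hc
    have hlen : p.length = p1.length + p2.length := by
      rw [← hps, Walk.length_append]
    have hlen2 : p2.length = p3.length + p4.length := by
      rw [← hps2, Walk.length_append]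
    have hp2path : p2.IsPath := hp.dropUntil hx
    have hp1path : p1.IsPath := hp.takeUntil hx
    have hp4path : p4.IsPath := hp2path.dropUntil hc
    have h30 : p3.length ≠ 0 := fun h0 => hxy (Walk.eq_of_length_eq_zero h0)
    have h31 : p3.length ≠ 1 := by
      intro h1
      exact he (p.edges_dropUntil_subset hx (p2.edges_takeUntil_subset hc
        (edge_mem_of_length_one p3 h1)))
    have h3 : 2 ≤ p3.length := by omega
    refine ⟨p1.append (Walk.cons ha p4), ?_, ?_, ?_, ?_⟩
    · -- IsPath
      rw [Walk.isPath_def, Walk.support_append, Walk.support_cons, List.tail_cons]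
      have hnd : p.support.Nodup := hp.support_nodup
      have hdisj : p1.support.Disjoint p2.support.tail := by
        have : (p1.support ++ p2.support.tail).Nodup := by
          rw [← Walk.support_append, hps]; exact hnd
        exact (List.nodup_append'.mp this).2.2
      have hxnot4 : x ∉ p4.support := by
        intro hx4
        have hnd2 : p2.support.Nodup := hp2path.support_nodup
        have : p2.support = p3.support ++ p4.support.tail := by
          rw [← Walk.support_append, hps2]
        rw [this, List.nodup_append'] at hnd2
        have hx3 : x ∈ p3.support := p3.start_mem_support
        have : x ∈ p4.support.tail := by
          rcases List.mem_cons.mp (Walk.support_eq_cons p4 ▸ hx4) with h | h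
          · exact absurd h hxy
          · exact h
        exact hnd2.2.2 hx3 this
      have hsub4 : ∀ z ∈ p4.support, z ∈ p2.support.tail := by
        intro z hz
        have : z ∈ p2.support := p2.support_dropUntil_subset hc hz
        rcases List.mem_cons.mp (Walk.support_eq_cons p2 ▸ this) with h | h
        · exact absurd (h ▸ hz) hxnot4
        · exact h
      rw [List.nodup_append']
      exact ⟨hp1path.support_nodup, hp4path.support_nodup,
        fun z hz1 hz4 => hdisj hz1 (hsub4 z hz4)⟩
    · intro z hz
      rw [Walk.support_append, Walk.support_cons, List.tail_cons, List.mem_append] at hz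
      rcases hz with hz | hz
      · exact p.support_takeUntil_subset hx hz
      · exact p.support_dropUntil_subset hx (p2.support_dropUntil_subset hc hz)
    · rw [Walk.length_append, Walk.length_cons]; omega
    · intro hq
      rw [Walk.length_append, Walk.length_cons] at hq
      have h10 : p1.length = 0 := by omega
      have h40 : p4.length = 0 := by omega
      have hsx : s = x := Walk.eq_of_length_eq_zero h10
      have hyt : y = t := Walk.eq_of_length_eq_zero h40
      rw [hsx, hyt]
  · -- y comes before x
    have hy' : y ∈ (p.takeUntil x hx).support := by
      have := p.take_spec hx
      have hmem : y ∈ (p.takeUntil x hx).support ++ (p.dropUntil x hx).support.tail := by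
        rw [← Walk.support_append, this]; exact hy
      rcases List.mem_append.mp hmem with h | h
      · exact h
      · exact absurd (List.mem_of_mem_tail h) hc
    set t1 := p.takeUntil x hx with ht1
    set t2 := p.dropUntil x hx with ht2
    set t1a := t1.takeUntil y hy' with ht1a
    set t1b := t1.dropUntil y hy' with ht1b
    have hps : t1.append t2 = p := p.take_spec hx
    have hps2 : t1a.append t1b = t1 := t1.take_spec hy'
    have hlen : p.length = t1.length + t2.length := by rw [← hps, Walk.length_append]
    have hlen2 : t1.length = t1a.length + t1b.length := by rw [← hps2, Walk.length_append]
    have ht1path : t1.IsPath := hp.takeUntil hx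
    have ht2path : t2.IsPath := hp.dropUntil hx
    have ht1apath : t1a.IsPath := ht1path.takeUntil hy'
    have h30 : t1b.length ≠ 0 := fun h0 => hxy (Walk.eq_of_length_eq_zero h0).symm
    have h31 : t1b.length ≠ 1 := by
      intro h1
      have : s(y, x) ∈ t1b.edges := edge_mem_of_length_one t1b h1
      have : s(y, x) ∈ p.edges := p.edges_takeUntil_subset hx (t1.edges_dropUntil_subset hy' this)
      rw [Sym2.eq_swap] at this
      exact he this
    have h3 : 2 ≤ t1b.length := by omega
    refine ⟨t1a.append (Walk.cons ha.symm t2), ?_, ?_, ?_, ?_⟩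
    · rw [Walk.isPath_def, Walk.support_append, Walk.support_cons, List.tail_cons]
      have hnd : p.support.Nodup := hp.support_nodup
      have hdisj : t1.support.Disjoint t2.support.tail := by
        have : (t1.support ++ t2.support.tail).Nodup := by
          rw [← Walk.support_append, hps]; exact hnd
        exact (List.nodup_append'.mp this).2.2
      have hxnot : x ∉ t1a.support := by
        intro hxa
        have hnd1 : t1.support.Nodup := ht1path.support_nodup
        have heq : t1.support = t1a.support ++ t1b.support.tail := by
          rw [← Walk.support_append, hps2]
        rw [heq, List.nodup_append'] at hnd1
        have hxb : x ∈ t1b.support := t1b.end_mem_support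
        have : x ∈ t1b.support.tail := by
          rcases List.mem_cons.mp (Walk.support_eq_cons t1b ▸ hxb) with h | h
          · exact absurd h hxy
          · exact h
        exact hnd1.2.2 hxa this
      rw [List.nodup_append']
      refine ⟨ht1apath.support_nodup, ht2path.support_nodup, fun z hza hz2 => ?_⟩
      have hz1 : z ∈ t1.support := t1.support_takeUntil_subset hy' hza
      rcases List.mem_cons.mp (Walk.support_eq_cons t2 ▸ hz2) with h | h
      · exact hxnot (h ▸ hza)
      · exact hdisj hz1 h
    · intro z hz
      rw [Walk.support_append, Walk.support_cons, List.tail_cons, List.mem_append] at hz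
      rcases hz with hz | hz
      · exact p.support_takeUntil_subset hx (t1.support_takeUntil_subset hy' hz)
      · exact p.support_dropUntil_subset hx hz
    · rw [Walk.length_append, Walk.length_cons]; omega
    · intro hq
      rw [Walk.length_append, Walk.length_cons] at hq
      have h10 : t1a.length = 0 := by omega
      have h20 : t2.length = 0 := by omega
      have hsy : s = y := Walk.eq_of_length_eq_zero h10
      have hxt : x = t := Walk.eq_of_length_eq_zero h20
      rw [← hsy, ← hxt, Sym2.eq_swap]

def SimpleGraph.IsChordal' {V : Type*} (G : SimpleGraph V) : Prop :=
  ∀ (v : V) (w : G.Walk v v), w.IsCycle → 4 ≤ w.length →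
    ∃ x y, x ∈ w.support ∧ y ∈ w.support ∧ G.Adj x y ∧ s(x, y) ∉ w.edges

lemma length_eq_one_of_edge {a b : V} {p : G.Walk a b} (hp : p.IsPath)
    (he : s(a, b) ∈ p.edges) : p.length = 1 := by
  cases p with
  | nil => simp at he
  | cons h q =>
    rename_i c
    rw [Walk.edges_cons, List.mem_cons] at he
    rw [Walk.cons_isPath_iff] at hp
    rcases he with he | he
    · have hbc : b = c := Sym2.congr_right.mp he
      subst hbc
      rw [Walk.isPath_iff_eq_nil.mp hp.1]
      simp
    · exact absurd (q.fst_mem_support_of_mem_edges he) hp.2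

lemma exists_good_path [DecidableEq V] {ps pt : V} (hs : s ∈ S) (ht : t ∈ S)
    (hst : s ≠ t) (hps : Reaches G S u ps) (has : G.Adj s ps)
    (hpt : Reaches G S u pt) (hat : G.Adj pt t) :
    ∃ p : G.Walk s t, p.IsPath ∧ 2 ≤ p.length ∧
      ∀ z ∈ p.support, z ≠ s → z ≠ t → Reaches G S u z := by
  obtain ⟨m0, hm0⟩ := hps.walk hpt
  have hmsup : ∀ z ∈ m0.bypass.support, Reaches G S u z := fun z hz =>
    hps.of_mem_support m0 hm0 (m0.support_bypass_subset hz)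
  set m := m0.bypass with hm
  have hmpath : m.IsPath := m0.bypass_isPath
  have hsnot : s ∉ m.support := fun h => (hmsup s h).notMem hs
  have htnot : t ∉ m.support := fun h => (hmsup t h).notMem ht
  refine ⟨Walk.cons has (m.append (Walk.cons hat Walk.nil)), ?_, ?_, ?_⟩
  · rw [Walk.isPath_def, Walk.support_cons, Walk.support_append, Walk.support_cons]
    simp only [Walk.support_nil, List.tail_cons, List.nodup_cons, List.nodup_append',
      List.mem_append, List.nodup_nil, List.mem_singleton]
    refine ⟨?_, hmpath.support_nodup, by simp, ?_⟩
    · rintro (h | h)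
      · exact hsnot h
      · exact hst h
    · intro z hz hz'
      rw [List.mem_singleton] at hz'
      exact htnot (hz' ▸ hz)
  · simp [Walk.length_cons, Walk.length_append]
  · intro z hz hzs hzt
    rw [Walk.support_cons, List.mem_cons] at hz
    rcases hz with h | h
    · exact absurd h hzs
    rw [Walk.support_append, List.mem_append, Walk.support_cons] at h
    rcases h with h | h
    · exact hmsup z h
    · simp at h
      exact absurd h hzt

lemma min_path_no_chord [DecidableEq V] {C : Set V} {p : G.Walk s t} (hp : p.IsPath)
    (hgood : ∀ z ∈ p.support, z ≠ s → z ≠ t → z ∈ C)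
    (hmin : ∀ q : G.Walk s t, q.IsPath → (∀ z ∈ q.support, z ≠ s → z ≠ t → z ∈ C) →
      2 ≤ q.length → p.length ≤ q.length)
    (hx : x ∈ p.support) (hy : y ∈ p.support) (ha : G.Adj x y)
    (he : s(x, y) ∉ p.edges) :
    s(x, y) = s(s, t) := by
  obtain ⟨q, hqp, hqsub, hqlen, hqedge⟩ := shortcut hp hx hy ha he
  by_cases h1 : q.length ≤ 1
  · exact hqedge h1
  · exfalso
    have := hmin q hqp (fun z hz hzs hzt => hgood z (hqsub z hz) hzs hzt) (by omega)
    omega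

/-- Two adjacent vertices of `S`, both with neighbors in the `u`-side region,
have a common neighbor there, provided `G` is chordal. -/
lemma common_nbr (hch : G.IsChordal') (hxS : x ∈ S) (hyS : y ∈ S) (hxy : G.Adj x y)
    (hxn : ∃ z, Reaches G S u z ∧ G.Adj z x) (hyn : ∃ z, Reaches G S u z ∧ G.Adj z y) :
    ∃ w, Reaches G S u w ∧ G.Adj x w ∧ G.Adj y w := by
  classical
  obtain ⟨zx, hzx, hazx⟩ := hxn
  obtain ⟨zy, hzy, hazy⟩ := hyn
  obtain ⟨p0, hp0path, hp0len, hp0good⟩ :=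
    exists_good_path hyS hxS hxy.ne.symm hzy hazy.symm hzx hazx
  have hex : ∃ n, ∃ p : G.Walk y x, (p.IsPath ∧ 2 ≤ p.length ∧
      (∀ z ∈ p.support, z ≠ y → z ≠ x → Reaches G S u z)) ∧ p.length = n :=
    ⟨p0.length, p0, ⟨hp0path, hp0len, hp0good⟩, rfl⟩
  obtain ⟨p, ⟨hppath, hplen, hpgood⟩, hpn⟩ := Nat.find_spec hex
  have hminp : ∀ q : G.Walk y x, q.IsPath →
      (∀ z ∈ q.support, z ≠ y → z ≠ x → Reaches G S u z) → 2 ≤ q.length →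
      p.length ≤ q.length := by
    intro q hq1 hq2 hq3
    rw [hpn]
    exact Nat.find_le ⟨q, ⟨hq1, hq3, hq2⟩, rfl⟩
  clear hpn hp0path hp0len hp0good
  have hedge : s(x, y) ∉ p.edges := by
    intro hmem
    rw [Sym2.eq_swap] at hmem
    have := length_eq_one_of_edge hppath hmem
    omega
  have hcyc : (Walk.cons hxy p).IsCycle := (Walk.cons_isCycle_iff p hxy).mpr ⟨hppath, hedge⟩
  by_cases hlen4 : 4 ≤ (Walk.cons hxy p).length
  · exfalso
    obtain ⟨x', y', hx', hy', ha', he'⟩ := hch x (Walk.cons hxy p) hcyc hlen4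
    have hx'' : x' ∈ p.support := by
      rw [Walk.support_cons, List.mem_cons] at hx'
      rcases hx' with h | h
      · exact h ▸ p.end_mem_support
      · exact h
    have hy'' : y' ∈ p.support := by
      rw [Walk.support_cons, List.mem_cons] at hy'
      rcases hy' with h | h
      · exact h ▸ p.end_mem_support
      · exact h
    have he'' : s(x', y') ∉ p.edges := fun h => he' (by
      rw [Walk.edges_cons, List.mem_cons]; exact Or.inr h)
    have heq := min_path_no_chord hppath hpgood hminp hx'' hy'' ha' he''
    apply he'
    rw [Walk.edges_cons, List.mem_cons, heq, Sym2.eq_swap]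
    exact Or.inl rfl
  · rw [Walk.length_cons] at hlen4
    have hp2 : p.length = 2 := by omega
    clear hcyc hlen4 hedge hminp
    cases p with
    | nil => simp at hp2
    | cons h1 q =>
      rename_i z
      cases q with
      | nil => simp at hp2
      | cons h2 r =>
        rename_i w
        rw [Walk.length_cons, Walk.length_cons] at hp2
        have hr0 : r.length = 0 := by omega
        have hwx := Walk.eq_of_length_eq_zero hr0
        subst hwx
        refine ⟨z, ?_, h2.symm, h1⟩  -- h2 : Adj z x (after subst)
        · apply hpgood z
          · rw [Walk.support_cons, List.mem_cons]
            exact Or.inr (Walk.start_mem_support _)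
          · exact h1.ne'
          · exact h2.ne

/-- Minimal separators of chordal graphs are cliques. -/
lemma sep_clique (hch : G.IsChordal') (hsep : G.IsUVSeparator u v S)
    (hmin : ∀ S' ⊂ S, ¬ G.IsUVSeparator u v S') (hs : s ∈ S) (ht : t ∈ S)
    (hst : s ≠ t) : G.Adj s t := by
  classical
  by_contra hna
  have hminv : ∀ S' ⊂ S, ¬ G.IsUVSeparator v u S' := fun S' h h' => hmin S' h h'.symm
  obtain ⟨as, hras, haas⟩ := exists_nbr_in_comp hsep hmin hs
  obtain ⟨at', hrat, haat⟩ := exists_nbr_in_comp hsep hmin ht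
  obtain ⟨bs, hrbs, habs⟩ := exists_nbr_in_comp hsep.symm hminv hs
  obtain ⟨bt, hrbt, habt⟩ := exists_nbr_in_comp hsep.symm hminv ht
  -- cross facts
  have hdisjC : ∀ z, Reaches G S u z → Reaches G S v z → False := by
    rintro z ⟨pz, hpz⟩ ⟨qz, hqz⟩
    refine sep_not_reaches hsep ⟨pz.append qz.reverse, ?_⟩
    intro a ha
    rw [Walk.support_append, List.mem_append] at ha
    rcases ha with ha | ha
    · exact hpz a ha
    · exact hqz a (by
        have := List.mem_of_mem_tail ha
        rwa [Walk.support_reverse, List.mem_reverse] at this)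
  have hcross : ∀ a b, Reaches G S u a → Reaches G S v b → ¬ G.Adj a b :=
    fun a b h1 h2 hab => hdisjC b (h1.adj hab h2.notMem) h2
  -- minimal good paths
  obtain ⟨p10, h10path, h10len, h10good⟩ :=
    exists_good_path hs ht hst hras haas.symm hrat haat
  have hex1 : ∃ n, ∃ p : G.Walk s t, (p.IsPath ∧ 2 ≤ p.length ∧
      (∀ z ∈ p.support, z ≠ s → z ≠ t → Reaches G S u z)) ∧ p.length = n :=
    ⟨p10.length, p10, ⟨h10path, h10len, h10good⟩, rfl⟩
  obtain ⟨p1, ⟨h1path, h1len, h1good⟩, h1n⟩ := Nat.find_spec hex1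
  have hmin1 : ∀ q : G.Walk s t, q.IsPath →
      (∀ z ∈ q.support, z ≠ s → z ≠ t → Reaches G S u z) → 2 ≤ q.length →
      p1.length ≤ q.length := fun q hq1 hq2 hq3 => by
    rw [h1n]; exact Nat.find_le ⟨q, ⟨hq1, hq3, hq2⟩, rfl⟩
  obtain ⟨p20, h20path, h20len, h20good⟩ :=
    exists_good_path ht hs hst.symm hrbt habt.symm hrbs habs
  have hex2 : ∃ n, ∃ p : G.Walk t s, (p.IsPath ∧ 2 ≤ p.length ∧
      (∀ z ∈ p.support, z ≠ t → z ≠ s → Reaches G S v z)) ∧ p.length = n :=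
    ⟨p20.length, p20, ⟨h20path, h20len, h20good⟩, rfl⟩
  obtain ⟨p2, ⟨h2path, h2len, h2good⟩, h2n⟩ := Nat.find_spec hex2
  have hmin2 : ∀ q : G.Walk t s, q.IsPath →
      (∀ z ∈ q.support, z ≠ t → z ≠ s → Reaches G S v z) → 2 ≤ q.length →
      p2.length ≤ q.length := fun q hq1 hq2 hq3 => by
    rw [h2n]; exact Nat.find_le ⟨q, ⟨hq1, hq3, hq2⟩, rfl⟩
  clear h1n h2n
  -- the cycle
  set c := p1.append p2 with hc
  have hccyc : c.IsCycle := by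
    rw [Walk.isCycle_def]
    refine ⟨?_, ?_, ?_⟩
    · -- trail
      rw [Walk.isTrail_def, hc, Walk.edges_append, List.nodup_append']
      refine ⟨h1path.isTrail.edges_nodup, h2path.isTrail.edges_nodup, ?_⟩
      intro e he1 he2
      induction e with
      | h a b =>
        have hmem : ∀ {α β : V} (pp : G.Walk α β), s(a,b) ∈ pp.edges →
            a ∈ pp.support ∧ b ∈ pp.support := fun pp hh =>
          ⟨pp.fst_mem_support_of_mem_edges hh, pp.snd_mem_support_of_mem_edges hh⟩
        obtain ⟨ha1, hb1⟩ := hmem p1 he1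
        obtain ⟨ha2, hb2⟩ := hmem p2 he2
        have hadj : G.Adj a b := p1.adj_of_mem_edges he1
        have hclass : ∀ z, z ∈ p1.support → z ∈ p2.support → z = s ∨ z = t := by
          intro z hz1 hz2
          by_contra hno
          push_neg at hno
          exact hdisjC z (h1good z hz1 hno.1 hno.2) (h2good z hz2 hno.2 hno.1)
        rcases hclass a ha1 ha2 with rfl | rfl <;> rcases hclass b hb1 hb2 with rfl | rfl
        · exact hadj.ne rfl
        · exact hna hadj
        · exact hna hadj.symm
        · exact hadj.ne rfl
    · intro hnil
      have : c.length = 0 := by rw [hnil]; simp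
      rw [hc, Walk.length_append] at this
      omega
    · -- support tail nodup
      rw [hc, Walk.support_append]
      rw [Walk.support_eq_cons p1]
      simp only [List.cons_append, List.tail_cons]
      rw [List.nodup_append']
      refine ⟨(Walk.isPath_def p1).mp h1path |>.tail, (Walk.isPath_def p2).mp h2path |>.tail, ?_⟩
      intro z hz1 hz2
      have hz1' : z ∈ p1.support := List.mem_of_mem_tail (by exact hz1)
      have hz2' : z ∈ p2.support := List.mem_of_mem_tail hz2
      have hzs : z ≠ s := by
        intro rfl'
        subst rfl'
        have := (Walk.isPath_def p1).mp h1path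
        rw [Walk.support_eq_cons p1] at this
        exact (List.nodup_cons.mp this).1 hz1
      have hzt : z ≠ t := by
        intro rfl'
        subst rfl'
        have := (Walk.isPath_def p2).mp h2path
        rw [Walk.support_eq_cons p2] at this
        exact (List.nodup_cons.mp this).1 hz2
      exact hdisjC z (h1good z hz1' hzs hzt) (h2good z hz2' hzt hzs)
  have hclen : 4 ≤ c.length := by
    rw [hc, Walk.length_append]; omega
  obtain ⟨x', y', hx', hy', ha', he'⟩ := hch s c hccyc hclen
  -- memberships
  have hmemc : ∀ z ∈ c.support, z ∈ p1.support ∨ z ∈ p2.support := by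
    intro z hz
    rw [hc, Walk.support_append, List.mem_append] at hz
    rcases hz with h | h
    · exact Or.inl h
    · exact Or.inr (List.mem_of_mem_tail h)
  have he1 : s(x', y') ∉ p1.edges := fun h =>
    he' (by rw [hc, Walk.edges_append, List.mem_append]; exact Or.inl h)
  have he2 : s(x', y') ∉ p2.edges := fun h =>
    he' (by rw [hc, Walk.edges_append, List.mem_append]; exact Or.inr h)
  have hnost : s(x', y') ≠ s(s, t) := by
    intro h
    rcases Sym2.eq_iff.mp h with ⟨rfl, rfl⟩ | ⟨rfl, rfl⟩
    · exact hna ha'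
    · exact hna ha'.symm
  have hnots : s(x', y') ≠ s(t, s) := fun h => hnost (h.trans Sym2.eq_swap)
  rcases hmemc x' hx' with hx1 | hx2
  · rcases hmemc y' hy' with hy1 | hy2
    · exact hnost (min_path_no_chord h1path h1good hmin1 hx1 hy1 ha' he1)
    · -- x' in p1, y' in p2
      by_cases hxst : x' = s ∨ x' = t
      · have hx2' : x' ∈ p2.support := by
          rcases hxst with rfl | rfl
          · exact p2.end_mem_support
          · exact p2.start_mem_support
        exact hnots (min_path_no_chord h2path h2good hmin2 hx2' hy2 ha' he2)
      · push_neg at hxst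
        by_cases hyst : y' = t ∨ y' = s
        · have hy1' : y' ∈ p1.support := by
            rcases hyst with rfl | rfl
            · exact p1.end_mem_support
            · exact p1.start_mem_support
          exact hnost (min_path_no_chord h1path h1good hmin1 hx1 hy1' ha' he1)
        · push_neg at hyst
          exact hcross x' y' (h1good x' hx1 hxst.1 hxst.2) (h2good y' hy2 hyst.1 hyst.2) ha'
  · rcases hmemc y' hy' with hy1 | hy2
    · by_cases hxst : x' = t ∨ x' = s
      · have hx1' : x' ∈ p1.support := by
          rcases hxst with rfl | rfl
          · exact p1.end_mem_support
          · exact p1.start_mem_support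
        exact hnost (min_path_no_chord h1path h1good hmin1 hx1' hy1 ha' he1)
      · push_neg at hxst
        by_cases hyst : y' = s ∨ y' = t
        · have hy2' : y' ∈ p2.support := by
            rcases hyst with rfl | rfl
            · exact p2.end_mem_support
            · exact p2.start_mem_support
          exact hnots (min_path_no_chord h2path h2good hmin2 hx2 hy2' ha' he2)
        · push_neg at hyst
          exact hcross y' x' (h1good y' hy1 hyst.1 hyst.2) (h2good x' hx2 hxst.1 hxst.2) ha'.symm
    · exact hnots (min_path_no_chord h2path h2good hmin2 hx2 hy2 ha' he2)

instance : DecidableRel gemGraph.Adj := fun i j =>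
  decidable_of_iff _ (SimpleGraph.fromRel_adj _ i j).symm

instance : DecidableRel dartGraph.Adj := fun i j =>
  decidable_of_iff _ (SimpleGraph.fromRel_adj _ i j).symm



lemma embed_of_maps (H : SimpleGraph (Fin 5)) (f : Fin 5 → V)
    (hinj : Function.Injective f)
    (h1 : ∀ i j, H.Adj i j → G.Adj (f i) (f j))
    (h2 : ∀ i j, i ≠ j → ¬H.Adj i j → ¬G.Adj (f i) (f j)) :
    Nonempty (H ↪g G) := by
  refine ⟨⟨⟨f, hinj⟩, ?_⟩⟩
  intro i j
  simp only [Function.Embedding.coeFn_mk]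
  constructor
  · intro hG
    by_contra hH
    have hij : i ≠ j := fun h => G.irrefl (h ▸ hG)
    exact h2 i j hij hH hG
  · exact h1 i j

lemma build_gem_or_dart {x y p u1 u2 : V}
    (hxy : G.Adj x y) (hxp : G.Adj x p) (hxu1 : G.Adj x u1) (hxu2 : G.Adj x u2)
    (hyu1 : G.Adj y u1) (hyu2 : G.Adj y u2)
    (hnyp : ¬ G.Adj y p) (hnu12 : ¬ G.Adj u1 u2) (hnpu1 : ¬ G.Adj p u1)
    (hyp : y ≠ p) (h12 : u1 ≠ u2) (hpu1 : p ≠ u1) :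
    Nonempty (gemGraph ↪g G) ∨ Nonempty (dartGraph ↪g G) := by
  have hpu2 : p ≠ u2 := fun h => hnyp (h ▸ hyu2)
  have hnyp' : ¬ G.Adj p y := fun h => hnyp h.symm
  have hnu12' : ¬ G.Adj u2 u1 := fun h => hnu12 h.symm
  have hnpu1' : ¬ G.Adj u1 p := fun h => hnpu1 h.symm
  by_cases hadj : G.Adj u2 p
  · left
    refine embed_of_maps gemGraph ![u1, y, u2, p, x] ?_ ?_ ?_
    · intro i j hij
      fin_cases i <;> fin_cases j <;>
        first
          | rfl
          | exact absurd hij hxy.ne | exact absurd hij hxy.ne'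
          | exact absurd hij hxp.ne | exact absurd hij hxp.ne'
          | exact absurd hij hxu1.ne | exact absurd hij hxu1.ne'
          | exact absurd hij hxu2.ne | exact absurd hij hxu2.ne'
          | exact absurd hij hyu1.ne | exact absurd hij hyu1.ne'
          | exact absurd hij hyu2.ne | exact absurd hij hyu2.ne'
          | exact absurd hij hadj.ne | exact absurd hij hadj.ne'
          | exact absurd hij hyp | exact absurd hij hyp.symm
          | exact absurd hij h12 | exact absurd hij h12.symm
          | exact absurd hij hpu1 | exact absurd hij hpu1.symm
          | exact absurd hij hpu2 | exact absurd hij hpu2.symm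
    · intro i j hij
      fin_cases i <;> fin_cases j <;>
        first
          | exact absurd hij (by decide)
          | exact hxy | exact hxy.symm
          | exact hxp | exact hxp.symm
          | exact hxu1 | exact hxu1.symm
          | exact hxu2 | exact hxu2.symm
          | exact hyu1 | exact hyu1.symm
          | exact hyu2 | exact hyu2.symm
          | exact hadj | exact hadj.symm
    · intro i j hij hH
      fin_cases i <;> fin_cases j <;>
        first
          | exact absurd rfl hij
          | exact absurd (by decide) hH
          | exact hnyp | exact hnyp'
          | exact hnu12 | exact hnu12'
          | exact hnpu1 | exact hnpu1'
  · right
    have hadj' : ¬ G.Adj p u2 := fun h => hadj h.symm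
    refine embed_of_maps dartGraph ![u1, y, x, u2, p] ?_ ?_ ?_
    · intro i j hij
      fin_cases i <;> fin_cases j <;>
        first
          | rfl
          | exact absurd hij hxy.ne | exact absurd hij hxy.ne'
          | exact absurd hij hxp.ne | exact absurd hij hxp.ne'
          | exact absurd hij hxu1.ne | exact absurd hij hxu1.ne'
          | exact absurd hij hxu2.ne | exact absurd hij hxu2.ne'
          | exact absurd hij hyu1.ne | exact absurd hij hyu1.ne'
          | exact absurd hij hyu2.ne | exact absurd hij hyu2.ne'
          | exact absurd hij hyp | exact absurd hij hyp.symm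
          | exact absurd hij h12 | exact absurd hij h12.symm
          | exact absurd hij hpu1 | exact absurd hij hpu1.symm
          | exact absurd hij hpu2 | exact absurd hij hpu2.symm
    · intro i j hij
      fin_cases i <;> fin_cases j <;>
        first
          | exact absurd hij (by decide)
          | exact hxy | exact hxy.symm
          | exact hxp | exact hxp.symm
          | exact hxu1 | exact hxu1.symm
          | exact hxu2 | exact hxu2.symm
          | exact hyu1 | exact hyu1.symm
          | exact hyu2 | exact hyu2.symm
    · intro i j hij hH
      fin_cases i <;> fin_cases j <;>
        first
          | exact absurd rfl hij
          | exact absurd (by decide) hH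
          | exact hnyp | exact hnyp'
          | exact hnu12 | exact hnu12'
          | exact hnpu1 | exact hnpu1'
          | exact hadj | exact hadj'

lemma reaches_not_both {u v : V} (hsep : G.IsUVSeparator u v S) (z : V)
    (h1 : Reaches G S u z) (h2 : Reaches G S v z) : False := by
  obtain ⟨pz, hpz⟩ := h1
  obtain ⟨qz, hqz⟩ := h2
  refine sep_not_reaches hsep ⟨pz.append qz.reverse, ?_⟩
  intro a ha
  rw [Walk.support_append, List.mem_append] at ha
  rcases ha with ha | ha
  · exact hpz a ha
  · exact hqz a (by
      have := List.mem_of_mem_tail ha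
      rwa [Walk.support_reverse, List.mem_reverse] at this)

lemma key {S1 S2 : Set V} (hch : G.IsChordal') (hS1 : G.IsMinVtxSep S1)
    (hS2 : G.IsMinVtxSep S2) {x y : V} (hx1 : x ∈ S1) (hx2 : x ∈ S2)
    (hy2 : y ∈ S2) (hy1 : y ∉ S1) :
    Nonempty (gemGraph ↪g G) ∨ Nonempty (dartGraph ↪g G) := by
  classical
  obtain ⟨a, b, hab, hnab, hsep1, hmin1⟩ := hS1
  obtain ⟨c, d, hcd, hncd, hsep2, hmin2⟩ := hS2
  have hmin1' : ∀ S' ⊂ S1, ¬ G.IsUVSeparator b a S' := fun S' h h' => hmin1 S' h h'.symm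
  have hmin2' : ∀ S' ⊂ S2, ¬ G.IsUVSeparator d c S' := fun S' h h' => hmin2 S' h h'.symm
  have hxyne : x ≠ y := fun h => hy1 (h ▸ hx1)
  have hxy : G.Adj x y := sep_clique hch hsep2 hmin2 hx2 hy2 hxyne
  -- pick p: neighbor of x in a component of G - S1 not containing y
  obtain ⟨pa, hrpa, hapa⟩ := exists_nbr_in_comp hsep1 hmin1 hx1
  obtain ⟨pb, hrpb, hapb⟩ := exists_nbr_in_comp hsep1.symm hmin1' hx1
  have hpick : ∃ p, G.Adj x p ∧ ¬ G.Adj y p ∧ y ≠ p := by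
    by_cases hya : Reaches G S1 a y
    · refine ⟨pb, hapb.symm, ?_, ?_⟩
      · intro h
        exact reaches_not_both hsep1 y hya (hrpb.adj h.symm hy1)
      · intro h
        exact reaches_not_both hsep1 y hya (h ▸ hrpb)
    · refine ⟨pa, hapa.symm, ?_, ?_⟩
      · intro h
        exact hya (hrpa.adj h.symm hy1)
      · intro h
        exact hya (h ▸ hrpa)
  obtain ⟨p, hxp, hnyp, hyp⟩ := hpick
  have hpS2 : p ∉ S2 := fun h => hnyp (sep_clique hch hsep2 hmin2 hy2 h hyp)
  -- common neighbours of x,y on both sides of S2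
  obtain ⟨xc, hrxc, haxc⟩ := exists_nbr_in_comp hsep2 hmin2 hx2
  obtain ⟨xd, hrxd, haxd⟩ := exists_nbr_in_comp hsep2.symm hmin2' hx2
  obtain ⟨yc, hryc, hayc⟩ := exists_nbr_in_comp hsep2 hmin2 hy2
  obtain ⟨yd, hryd, hayd⟩ := exists_nbr_in_comp hsep2.symm hmin2' hy2
  obtain ⟨w1, hrw1, haw1x, haw1y⟩ :=
    common_nbr hch hx2 hy2 hxy ⟨xc, hrxc, haxc⟩ ⟨yc, hryc, hayc⟩
  obtain ⟨w2, hrw2, haw2x, haw2y⟩ :=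
    common_nbr (u := d) hch hx2 hy2 hxy ⟨xd, hrxd, haxd⟩ ⟨yd, hryd, hayd⟩
  -- choose u1 on the side not containing p
  by_cases hpc : Reaches G S2 c p
  · -- p is on the c-side; take u1 := w2 (d-side), u2 := w1 (c-side)
    refine build_gem_or_dart hxy hxp haw2x haw1x haw2y haw1y hnyp ?_ ?_ hyp ?_ ?_
    · intro h
      exact reaches_not_both hsep2 w1 hrw1 (hrw2.adj h hrw1.notMem)
    · intro h
      exact reaches_not_both hsep2 p hpc (hrw2.adj h.symm hpS2)
    · intro h
      exact reaches_not_both hsep2 w1 hrw1 (h ▸ hrw2)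
    · intro h
      exact reaches_not_both hsep2 p hpc (h ▸ hrw2)
  · -- p is not on the c-side; take u1 := w1 (c-side), u2 := w2 (d-side)
    refine build_gem_or_dart hxy hxp haw1x haw2x haw1y haw2y hnyp ?_ ?_ hyp ?_ ?_
    · intro h
      exact reaches_not_both hsep2 w2 (hrw1.adj h hrw2.notMem) hrw2
    · intro h
      exact hpc (hrw1.adj h.symm hpS2)
    · intro h
      exact reaches_not_both hsep2 w1 hrw1 (h ▸ hrw2)
    · intro h
      exact hpc (h ▸ hrw1)

lemma exists_minsep [Fintype V] {u v : V} (hne : u ≠ v) (hnadj : ¬ G.Adj u v) :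
    ∃ S, G.IsUVSeparator u v S ∧ ∀ S' ⊂ S, ¬ G.IsUVSeparator u v S' := by
  classical
  have h0 : G.IsUVSeparator u v ((Set.univ : Set V) \ {u, v}) := by
    refine ⟨by simp, by simp, ?_⟩
    intro p
    cases p with
    | nil => exact absurd rfl hne
    | cons h q =>
      rename_i z
      refine ⟨z, ?_, ?_⟩
      · rw [Walk.support_cons]
        exact List.mem_cons_of_mem _ q.start_mem_support
      · simp only [Set.mem_diff, Set.mem_univ, Set.mem_insert_iff, Set.mem_singleton_iff,
          true_and]
        push_neg
        exact ⟨fun hz => G.irrefl (hz ▸ h), fun hz => hnadj (hz ▸ h)⟩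
  have hex : ∃ n, ∃ S, G.IsUVSeparator u v S ∧ S.ncard = n := ⟨_, _, h0, rfl⟩
  obtain ⟨S, hS, hcard⟩ := Nat.find_spec hex
  refine ⟨S, hS, ?_⟩
  intro S' hsub hS'
  have hlt : S'.ncard < S.ncard := Set.ncard_lt_ncard hsub (Set.toFinite S)
  have hle : Nat.find hex ≤ S'.ncard := Nat.find_le ⟨S', hS', rfl⟩
  omega

lemma mem_sep_of_common_nbr {w : V} (hsep : G.IsUVSeparator u v S) (h1 : G.Adj u w)
    (h2 : G.Adj w v) : w ∈ S := by
  obtain ⟨z, hz, hzS⟩ := hsep.2.2 (Walk.cons h1 (Walk.cons h2 Walk.nil))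
  simp only [Walk.support_cons, Walk.support_nil, List.mem_cons, List.mem_singleton] at hz
  rcases hz with rfl | rfl | rfl | h
  · exact absurd hzS hsep.1
  · exact hzS
  · exact absurd hzS hsep.2.1
  · simp at h
  
end Aux

/-- For a finite connected chordal graph, any two distinct minimal vertex separators are
disjoint iff the graph has no induced subgraph isomorphic to the gem or to the dart. -/
theorem strictly_chordal_iff_gem_dart_free {V : Type*} [Fintype V] (G : SimpleGraph V)
    (hconn : G.Connected) (hchordal : G.IsChordal) :
    (∀ S S' : Set V, G.IsMinVtxSep S → G.IsMinVtxSep S' → S ≠ S' → Disjoint S S') ↔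
      (IsEmpty (gemGraph ↪g G) ∧ IsEmpty (dartGraph ↪g G)) := by
  classical
  have hch' : G.IsChordal' := hchordal
  constructor
  · intro hdisj
    constructor
    · refine ⟨fun f => ?_⟩
      have hinj := f.injective
      have hmap : ∀ i j : Fin 5, gemGraph.Adj i j → G.Adj (f i) (f j) :=
        fun i j h => f.map_rel_iff.mpr h
      obtain ⟨S, hS, hSmin⟩ := exists_minsep (G := G) (u := f 0) (v := f 2)
        (fun h => (by decide : (0 : Fin 5) ≠ 2) (hinj h))
        (fun h => (by decide : ¬ gemGraph.Adj 0 2) (f.map_rel_iff.mp h))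
      obtain ⟨S', hS', hS'min⟩ := exists_minsep (G := G) (u := f 1) (v := f 3)
        (fun h => (by decide : (1 : Fin 5) ≠ 3) (hinj h))
        (fun h => (by decide : ¬ gemGraph.Adj 1 3) (f.map_rel_iff.mp h))
      have h1S : f 1 ∈ S :=
        mem_sep_of_common_nbr hS (hmap 0 1 (by decide)) (hmap 1 2 (by decide))
      have h4S : f 4 ∈ S :=
        mem_sep_of_common_nbr hS (hmap 0 4 (by decide)) (hmap 4 2 (by decide))
      have h4S' : f 4 ∈ S' :=
        mem_sep_of_common_nbr hS' (hmap 1 4 (by decide)) (hmap 4 3 (by decide))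
      have hSne : S ≠ S' := fun h => hS'.1 (h ▸ h1S)
      have hd := hdisj S S'
        ⟨f 0, f 2, fun h => (by decide : (0 : Fin 5) ≠ 2) (hinj h),
          fun h => (by decide : ¬ gemGraph.Adj 0 2) (f.map_rel_iff.mp h), hS, hSmin⟩
        ⟨f 1, f 3, fun h => (by decide : (1 : Fin 5) ≠ 3) (hinj h),
          fun h => (by decide : ¬ gemGraph.Adj 1 3) (f.map_rel_iff.mp h), hS', hS'min⟩
        hSne
      exact Set.disjoint_left.mp hd h4S h4S'
    · refine ⟨fun f => ?_⟩
      have hinj := f.injective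
      have hmap : ∀ i j : Fin 5, dartGraph.Adj i j → G.Adj (f i) (f j) :=
        fun i j h => f.map_rel_iff.mpr h
      obtain ⟨S, hS, hSmin⟩ := exists_minsep (G := G) (u := f 0) (v := f 3)
        (fun h => (by decide : (0 : Fin 5) ≠ 3) (hinj h))
        (fun h => (by decide : ¬ dartGraph.Adj 0 3) (f.map_rel_iff.mp h))
      obtain ⟨S', hS', hS'min⟩ := exists_minsep (G := G) (u := f 1) (v := f 4)
        (fun h => (by decide : (1 : Fin 5) ≠ 4) (hinj h))
        (fun h => (by decide : ¬ dartGraph.Adj 1 4) (f.map_rel_iff.mp h))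
      have h1S : f 1 ∈ S :=
        mem_sep_of_common_nbr hS (hmap 0 1 (by decide)) (hmap 1 3 (by decide))
      have h2S : f 2 ∈ S :=
        mem_sep_of_common_nbr hS (hmap 0 2 (by decide)) (hmap 2 3 (by decide))
      have h2S' : f 2 ∈ S' :=
        mem_sep_of_common_nbr hS' (hmap 1 2 (by decide)) (hmap 2 4 (by decide))
      have hSne : S ≠ S' := fun h => hS'.1 (h ▸ h1S)
      have hd := hdisj S S'
        ⟨f 0, f 3, fun h => (by decide : (0 : Fin 5) ≠ 3) (hinj h),
          fun h => (by decide : ¬ dartGraph.Adj 0 3) (f.map_rel_iff.mp h), hS, hSmin⟩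
        ⟨f 1, f 4, fun h => (by decide : (1 : Fin 5) ≠ 4) (hinj h),
          fun h => (by decide : ¬ dartGraph.Adj 1 4) (f.map_rel_iff.mp h), hS', hS'min⟩
        hSne
      exact Set.disjoint_left.mp hd h2S h2S'
  · rintro ⟨hgem, hdart⟩ S S' hS hS' hne
    by_contra hnd
    obtain ⟨x, hx1, hx2⟩ := Set.not_disjoint_iff.mp hnd
    rcases em (∃ y, y ∈ S' ∧ y ∉ S) with ⟨y, hy2, hy1⟩ | hno
    · rcases key hch' hS hS' hx1 hx2 hy2 hy1 with he | he
      · exact he.elim hgem.false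
      · exact he.elim hdart.false
    · push_neg at hno
      have hsub : S' ⊆ S := fun z hz => hno z hz
      have : ∃ y, y ∈ S ∧ y ∉ S' := by
        by_contra h2
        push_neg at h2
        exact hne (Set.Subset.antisymm (fun z hz => h2 z hz) hsub)
      obtain ⟨y, hy1, hy2⟩ := this
      rcases key hch' hS' hS hx2 hx1 hy1 hy2 with he | he
      · exact he.elim hgem.false
      · exact he.elim hdart.false
end

section
/- Let G be a finite connected strictly chordal graph and let S be a minimal vertex separator of G. Then S is a minimal separator of the whole graph G: the graph G − S is disconnected, and G − S′ is connected for every proper subset S′ of S. -/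
/-- A graph is strictly chordal if it is chordal and any two distinct minimal vertex
separators are disjoint. -/
def SimpleGraph.IsStrictlyChordal {V : Type*} (G : SimpleGraph V) : Prop :=
  G.IsChordal ∧
    ∀ S S' : Set V, G.IsMinVtxSep S → G.IsMinVtxSep S' → S ≠ S' → Disjoint S S'

/-- A walk in `G` whose support lies in `s` gives reachability in the induced graph. -/
lemma reachable_induce_of_walk {V : Type*} {G : SimpleGraph V} {s : Set V} :
    ∀ {a b : V} (p : G.Walk a b), (∀ x ∈ p.support, x ∈ s) →
    ∀ (ha : a ∈ s) (hb : b ∈ s), (SimpleGraph.induce s G).Reachable ⟨a, ha⟩ ⟨b, hb⟩ := by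
  intro a b p
  induction p with
  | nil => intro _ ha hb; rfl
  | @cons a c b h q ih =>
    intro hsup ha hb
    have hc : c ∈ s := hsup c (by simp)
    have hadj : (SimpleGraph.induce s G).Adj ⟨a, ha⟩ ⟨c, hc⟩ := by
      simpa using h
    exact hadj.reachable.trans (ih (fun x hx => hsup x (by simp [hx])) hc hb)

/-- Reachability in the induced graph gives a walk in `G` with support in `s`. -/
lemma walk_of_reachable_induce {V : Type*} {G : SimpleGraph V} {s : Set V} {a b : ↥s}
    (h : (SimpleGraph.induce s G).Reachable a b) :
    ∃ p : G.Walk a b, ∀ x ∈ p.support, x ∈ s := by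
  obtain ⟨q⟩ := h
  refine ⟨q.map (SimpleGraph.Embedding.induce s).toHom, ?_⟩
  intro x hx
  replace hx : x ∈ q.support.map (SimpleGraph.Embedding.induce (G := G) s).toHom := by
    rw [← SimpleGraph.Walk.support_map]; exact hx
  obtain ⟨y, _, rfl⟩ := List.mem_map.mp hx
  exact y.2

/-- Every minimal vertex separator `S` of a finite connected strictly chordal graph is a
minimal separator of the whole graph: `G - S` is disconnected and `G - S'` is connected
for every proper subset `S'` of `S`. -/
theorem minVtxSep_is_minimal_separator {V : Type*} [Fintype V] (G : SimpleGraph V)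
    (hconn : G.Connected) (hsc : G.IsStrictlyChordal) (S : Set V) (hS : G.IsMinVtxSep S) :
    ¬ (SimpleGraph.induce Sᶜ G).Connected ∧
      ∀ S' ⊂ S, (SimpleGraph.induce S'ᶜ G).Connected := by
  obtain ⟨u, v, huv, hadj, ⟨huS, hvS, hsep⟩, hmin⟩ := hS
  constructor
  · intro hC
    have hr := hC.preconnected ⟨u, huS⟩ ⟨v, hvS⟩
    obtain ⟨p, hp⟩ := walk_of_reachable_induce hr
    obtain ⟨x, hx, hxS⟩ := hsep p
    exact hp x hx hxS
  · intro S' hS'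
    by_contra hnc
    have hne : Nonempty ↥S'ᶜ := ⟨⟨u, fun h => huS (hS'.1 h)⟩⟩
    rw [SimpleGraph.connected_iff] at hnc
    have hpre : ¬ (SimpleGraph.induce S'ᶜ G).Preconnected := fun h => hnc ⟨h, hne⟩
    unfold SimpleGraph.Preconnected at hpre
    push_neg at hpre
    obtain ⟨a, b, hab⟩ := hpre
    -- `a`, `b` are not reachable from each other in `G - S'`
    have haneb : (a : V) ≠ (b : V) := by
      intro h
      exact hab (by rw [Subtype.ext h])
    have hnadj : ¬ G.Adj (a : V) (b : V) := by
      intro h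
      have : (SimpleGraph.induce S'ᶜ G).Adj a b := by simpa using h
      exact hab this.reachable
    have hsepS' : G.IsUVSeparator (a : V) (b : V) S' := by
      refine ⟨a.2, b.2, fun p => ?_⟩
      by_contra hp
      push_neg at hp
      have : ∀ x ∈ p.support, x ∈ S'ᶜ := fun x hx => hp x hx
      exact hab (by simpa using reachable_induce_of_walk p this a.2 b.2)
    -- extract a minimal `ab`-separator `T ⊆ S'`
    have hwf : WellFounded ((· < ·) : Set V → Set V → Prop) :=
      Finite.to_wellFoundedLT.wf
    obtain ⟨T, ⟨hTS', hTsep⟩, hTmin⟩ := hwf.has_min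
      {T : Set V | T ⊆ S' ∧ G.IsUVSeparator (a : V) (b : V) T} ⟨S', subset_rfl, hsepS'⟩
    have hTminsep : G.IsMinVtxSep T := by
      refine ⟨a, b, haneb, hnadj, hTsep, fun T' hT' hsepT' => ?_⟩
      exact hTmin T' ⟨hT'.subset.trans hTS', hsepT'⟩ hT'
    have hTneS : T ≠ S := by
      intro h
      exact hS'.2 (h ▸ hTS')
    have hdisjoint : Disjoint S T :=
      hsc.2 S T ⟨u, v, huv, hadj, ⟨huS, hvS, hsep⟩, hmin⟩ hTminsep hTneS.symm
    -- but `T` is nonempty (as `G` is connected) and `T ⊆ S' ⊆ S`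
    obtain ⟨p⟩ := hconn.preconnected (a : V) (b : V)
    obtain ⟨x, _, hxT⟩ := hTsep.2.2 p
    exact (hdisjoint.ne_of_mem (hS'.1 (hTS' hxT)) hxT) rfl
end

section
/- Let G be a finite connected strictly chordal graph. Then every critical clique of G (every equivalence class of the true-twin relation) is either the set of all simplicial vertices of some maximal clique of G, or a minimal vertex separator of G. -/
/-- A vertex is simplicial if its neighborhood is a clique. -/
def SimpleGraph.IsSimplicialVtx {V : Type*} (G : SimpleGraph V) (v : V) : Prop :=
  G.IsClique (G.neighborSet v)

/-- The closed neighborhood `N[v]` of a vertex. -/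
def SimpleGraph.closedNbhd {V : Type*} (G : SimpleGraph V) (v : V) : Set V :=
  insert v (G.neighborSet v)

/-- A critical clique: an equivalence class of the true-twin relation `N[u] = N[v]`. -/
def SimpleGraph.IsCriticalClique {V : Type*} (G : SimpleGraph V) (C : Set V) : Prop :=
  ∃ v : V, C = {u : V | G.closedNbhd u = G.closedNbhd v}

/-- A maximal clique. -/
def SimpleGraph.IsMaxClique {V : Type*} (G : SimpleGraph V) (Q : Set V) : Prop :=
  G.IsClique Q ∧ ∀ Q' : Set V, G.IsClique Q' → Q ⊆ Q' → Q' = Q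
namespace StrictChordalAux

open SimpleGraph Walk

variable {V : Type*} {G : SimpleGraph V} {a b : V}

lemma mem_closedNbhd {z : V} : z ∈ G.closedNbhd a ↔ z = a ∨ G.Adj a z := by
  simp [SimpleGraph.closedNbhd, SimpleGraph.mem_neighborSet]

/-- The set of vertices reachable from `b` avoiding `N[a]`. -/
def sB (G : SimpleGraph V) (a b : V) : Set V :=
  {x | ∃ p : G.Walk b x, ∀ z ∈ p.support, z ∉ G.closedNbhd a}

/-- The neighborhood of `sB G a b` inside `N(a)`; a minimal `ab`-separator. -/
def sS (G : SimpleGraph V) (a b : V) : Set V :=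
  {s | G.Adj a s ∧ ∃ x ∈ sB G a b, G.Adj s x}

lemma b_mem_sB (hne : a ≠ b) (hnadj : ¬ G.Adj a b) : b ∈ sB G a b := by
  refine ⟨Walk.nil, ?_⟩
  intro z hz
  simp only [Walk.support_nil, List.mem_singleton] at hz
  subst hz
  rw [mem_closedNbhd]
  rintro (rfl | h) <;> [exact hne rfl; exact hnadj h]

lemma sB_avoid {x : V} (hx : x ∈ sB G a b) : x ∉ G.closedNbhd a := by
  obtain ⟨p, hp⟩ := hx
  exact hp x p.end_mem_support

lemma sB_subwalk {x z : V} (p : G.Walk b x) (hp : ∀ z ∈ p.support, z ∉ G.closedNbhd a)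
    (hz : z ∈ p.support) : z ∈ sB G a b := by
  classical
  exact ⟨p.takeUntil z hz, fun w hw => hp w (p.support_takeUntil_subset hz hw)⟩

lemma sB_extend {x y : V} (hx : x ∈ sB G a b) (hadj : G.Adj x y)
    (hy : y ∉ G.closedNbhd a) : y ∈ sB G a b := by
  obtain ⟨p, hp⟩ := hx
  refine ⟨p.concat hadj, ?_⟩
  intro z hz
  rw [Walk.support_concat, List.mem_append, List.mem_singleton] at hz
  rcases hz with hz | rfl
  · exact hp z hz
  · exact hy

lemma a_not_mem_sB : a ∉ sB G a b := fun h => sB_avoid h (Set.mem_insert _ _)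

lemma not_mem_sB_of_adj {x : V} (h : G.Adj a x) : x ∉ sB G a b :=
  fun hx => sB_avoid hx (Set.mem_insert_iff.2 (Or.inr h))

lemma mem_sS {s : V} : s ∈ sS G a b ↔ G.Adj a s ∧ ∃ x ∈ sB G a b, G.Adj s x := Iff.rfl

lemma a_not_mem_sS : a ∉ sS G a b := fun h => G.irrefl h.1

lemma b_not_mem_sS (hnadj : ¬ G.Adj a b) : b ∉ sS G a b := fun h => hnadj h.1

/-- Every walk ending in `sB` either meets `sS` or lies entirely in `sB`. -/
lemma walk_alternative (hne : a ≠ b) (hnadj : ¬ G.Adj a b) :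
    ∀ {d e : V} (q : G.Walk d e), e ∈ sB G a b →
      (∃ z ∈ q.support, z ∈ sS G a b) ∨ (∀ z ∈ q.support, z ∈ sB G a b) := by
  intro d e q
  induction q with
  | nil =>
    intro he
    right
    intro z hz
    simp only [Walk.support_nil, List.mem_singleton] at hz
    subst hz
    exact he
  | @cons d e _ h r ih =>
    intro hend
    rcases ih hend with ⟨z, hz, hzS⟩ | hall
    · exact Or.inl ⟨z, by simp [hz], hzS⟩
    · have heB : e ∈ sB G a b := hall e r.start_mem_support
      by_cases hd : d ∈ G.closedNbhd a
      · rcases mem_closedNbhd.1 hd with rfl | hd'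
        · exact absurd (Set.mem_insert_iff.2 (Or.inr h)) (sB_avoid heB)
        · exact Or.inl ⟨d, by simp, hd', e, heB, h⟩
      · right
        intro z hz
        rw [Walk.support_cons, List.mem_cons] at hz
        rcases hz with rfl | hz
        · exact sB_extend heB h.symm hd
        · exact hall z hz

lemma sS_separates (hne : a ≠ b) (hnadj : ¬ G.Adj a b) :
    G.IsUVSeparator a b (sS G a b) := by
  refine ⟨a_not_mem_sS, b_not_mem_sS hnadj, ?_⟩
  intro p
  cases p with
  | nil => exact absurd rfl hne
  | @cons _ e _ h r =>
    rcases walk_alternative hne hnadj r (b_mem_sB hne hnadj) with ⟨z, hz, hzS⟩ | hall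
    · exact ⟨z, by simp [hz], hzS⟩
    · exact absurd (Set.mem_insert_iff.2 (Or.inr h))
        (sB_avoid (hall e r.start_mem_support))

lemma sS_minimal (hne : a ≠ b) (hnadj : ¬ G.Adj a b) :
    ∀ S' ⊂ sS G a b, ¬ G.IsUVSeparator a b S' := by
  intro S' hlt hsep
  obtain ⟨hsub, hne'⟩ := hlt
  obtain ⟨s, hsS, hsS'⟩ : ∃ s, s ∈ sS G a b ∧ s ∉ S' := by
    by_contra hc
    push_neg at hc
    exact hne' (fun z hz => hc z hz)
  obtain ⟨has, x, hxB, hsx⟩ := hsS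
  obtain ⟨px, hpx⟩ := hxB
  obtain ⟨z, hz, hzS'⟩ := hsep.2.2 (Walk.cons has (Walk.cons hsx px.reverse))
  simp only [Walk.support_cons, List.mem_cons] at hz
  rcases hz with rfl | rfl | hz
  · exact a_not_mem_sS (hsub hzS')
  · exact hsS' hzS'
  · rw [Walk.support_reverse, List.mem_reverse] at hz
    exact hpx z hz (Set.mem_insert_iff.2 (Or.inr (hsub hzS').1))

lemma mem_sS_of_adj {v : V} (hne : a ≠ b) (hnadj : ¬ G.Adj a b)
    (hva : G.Adj v a) (hvb : G.Adj v b) : v ∈ sS G a b :=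
  ⟨hva.symm, b, b_mem_sB hne hnadj, hvb⟩

lemma edge_of_length_one {u v : V} (W : G.Walk u v) (h : W.length = 1) :
    s(u, v) ∈ W.edges := by
  cases W with
  | nil => simp at h
  | cons hadj W' =>
    simp only [Walk.length_cons, Nat.add_eq_right] at h
    have := Walk.eq_of_length_eq_zero h
    subst this
    simp

end StrictChordalAux
namespace StrictChordalAux

open SimpleGraph Walk

variable {V : Type*} {G : SimpleGraph V} {a b : V}

lemma sS_clique (hch : G.IsChordal) (hne : a ≠ b) (hnadj : ¬ G.Adj a b) :
    ∀ x ∈ sS G a b, ∀ y ∈ sS G a b, x ≠ y → G.Adj x y := by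
  classical
  intro x hx y hy hxyne
  by_contra hxy
  obtain ⟨hax, p0, hp0B, hxp0⟩ := hx
  obtain ⟨hay, q0, hq0B, hyq0⟩ := hy
  set P : ℕ → Prop := fun n => ∃ (p q : V) (R : G.Walk p q), G.Adj x p ∧ G.Adj y q ∧
      (∀ z ∈ R.support, z ∈ sB G a b) ∧ R.IsPath ∧ R.length = n with hPdef
  have hPex : ∃ n, P n := by
    obtain ⟨pb, hpb⟩ := hp0B
    obtain ⟨qb, hqb⟩ := hq0B
    refine ⟨_, p0, q0, (pb.reverse.append qb).bypass, hxp0, hyq0, ?_,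
      Walk.bypass_isPath _, rfl⟩
    intro z hz
    have hz' := Walk.support_bypass_subset _ hz
    rw [Walk.mem_support_append_iff, Walk.support_reverse, List.mem_reverse] at hz'
    rcases hz' with h | h
    · exact sB_subwalk pb hpb h
    · exact sB_subwalk qb hqb h
  obtain ⟨p, q, R, hxp, hyq, hRB, hRpath, hRlen⟩ := Nat.find_spec hPex
  have hmin : ∀ (p' q' : V) (R' : G.Walk p' q'), G.Adj x p' → G.Adj y q' →
      (∀ z ∈ R'.support, z ∈ sB G a b) → Nat.find hPex ≤ R'.length := by
    intro p' q' R' h1 h2 h3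
    have hPn : P R'.bypass.length := ⟨p', q', R'.bypass, h1, h2,
      fun z hz => h3 z (Walk.support_bypass_subset _ hz), Walk.bypass_isPath _, rfl⟩
    exact le_trans (Nat.find_min' hPex hPn) (Walk.length_bypass_le _)
  -- basic facts
  have hxR : x ∉ R.support := fun h => not_mem_sB_of_adj hax (hRB x h)
  have hyR : y ∉ R.support := fun h => not_mem_sB_of_adj hay (hRB y h)
  have haR : a ∉ R.support := fun h => a_not_mem_sB (hRB a h)
  have hpB : p ∈ sB G a b := hRB p R.start_mem_support
  have hqB : q ∈ sB G a b := hRB q R.end_mem_support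
  have hax' : a ≠ x := hax.ne
  have hay' : a ≠ y := hay.ne
  have hap : a ≠ p := fun h => a_not_mem_sB (h ▸ hpB)
  have haq : a ≠ q := fun h => a_not_mem_sB (h ▸ hqB)
  have hxq : x ≠ q := fun h => not_mem_sB_of_adj hax (h ▸ hqB)
  have hxp' : x ≠ p := fun h => not_mem_sB_of_adj hax (h ▸ hpB)
  have hyq' : y ≠ q := fun h => not_mem_sB_of_adj hay (h ▸ hqB)
  -- the cycle
  set Wt : G.Walk q x := R.reverse.append (Walk.cons hxp.symm Walk.nil) with hWtdef
  set w : G.Walk x x := Walk.cons hax.symm (Walk.cons hay (Walk.cons hyq Wt)) with hwdef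
  have hWtsupp : Wt.support = R.support.reverse ++ [x] := by
    rw [hWtdef, Walk.support_append, Walk.support_reverse]
    rfl
  have hWsupp : ∀ z, z ∈ w.support ↔ z = x ∨ z = a ∨ z = y ∨ z ∈ R.support := by
    intro z
    rw [hwdef]
    simp only [Walk.support_cons, List.mem_cons, hWtsupp, List.mem_append,
      List.mem_reverse, List.mem_singleton, List.not_mem_nil]
    have := R.start_mem_support
    tauto
  have hWtE : Wt.edges = R.edges.reverse ++ [s(p, x)] := by
    rw [hWtdef, Walk.edges_append, Walk.edges_reverse]
    rfl
  have hWE : ∀ e, e ∈ w.edges ↔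
      e = s(x, a) ∨ e = s(a, y) ∨ e = s(y, q) ∨ e ∈ R.edges ∨ e = s(p, x) := by
    intro e
    rw [hwdef]
    simp only [Walk.edges_cons, List.mem_cons, hWtE, List.mem_append,
      List.mem_reverse, List.mem_singleton, List.not_mem_nil]
    tauto
  have hcyc : w.IsCycle := by
    rw [hwdef, Walk.cons_isCycle_iff]
    constructor
    · rw [Walk.isPath_def]
      simp only [Walk.support_cons, hWtsupp]
      have hnd : List.Nodup (R.support.reverse ++ [x]) := by
        rw [List.nodup_append]
        refine ⟨List.nodup_reverse.2 hRpath.support_nodup, List.nodup_singleton _, ?_⟩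
        intro z hz _ hz' rfl
        rw [List.mem_reverse] at hz
        rw [List.mem_singleton] at hz'
        exact hxR (hz' ▸ hz)
      refine List.Nodup.cons ?_ (List.Nodup.cons ?_ hnd)
      · intro h
        rcases List.mem_cons.1 h with rfl | h
        · exact hay' rfl
        · rcases List.mem_append.1 h with h | h
          · exact haR (List.mem_reverse.1 h)
          · exact hax' (List.mem_singleton.1 h)
      · intro h
        rcases List.mem_append.1 h with h | h
        · exact hyR (List.mem_reverse.1 h)
        · exact hxyne (List.mem_singleton.1 h).symm
    · intro hmem
      simp only [Walk.edges_cons, List.mem_cons, hWtE, List.mem_append,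
        List.mem_reverse, List.mem_singleton, List.not_mem_nil] at hmem
      rcases hmem with h | h | h | h | h
      · rw [Sym2.eq_iff] at h
        rcases h with ⟨h1, h2⟩ | ⟨h1, h2⟩
        · exact hax' h1.symm
        · exact hxyne h1
      · rw [Sym2.eq_iff] at h
        rcases h with ⟨h1, h2⟩ | ⟨h1, h2⟩
        · exact hxyne h1
        · exact hxq h1
      · exact haR (Walk.snd_mem_support_of_mem_edges R h)
      · rw [Sym2.eq_iff] at h
        rcases h with ⟨h1, h2⟩ | h
        · exact hxp' h1
        · exact hap h.2
      · exact h
  have hlen4 : 4 ≤ w.length := by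
    have : Wt.length = R.length + 1 := by
      simp [hWtdef, Walk.length_append]
    rw [hwdef]
    simp only [Walk.length_cons, this]
    omega
  -- shortcut lemmas
  have hshort1 : ∀ d', d' ∈ R.support → G.Adj x d' → s(x, d') ∉ w.edges → False := by
    intro d' hd' hadj hnE
    by_cases hdp : d' = p
    · subst hdp
      exact hnE ((hWE _).2 (Or.inr (Or.inr (Or.inr (Or.inr Sym2.eq_swap)))))
    · have hspec := congrArg Walk.length (R.take_spec hd')
      rw [Walk.length_append] at hspec
      have htpos : (R.takeUntil d' hd').length ≠ 0 := fun h0 =>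
        hdp (Walk.eq_of_length_eq_zero h0).symm
      have hm := hmin d' q (R.dropUntil d' hd') hadj hyq
        (fun z hz => hRB z (R.support_dropUntil_subset hd' hz))
      omega
  have hshort2 : ∀ d', d' ∈ R.support → G.Adj y d' → s(y, d') ∉ w.edges → False := by
    intro d' hd' hadj hnE
    by_cases hdq : d' = q
    · subst hdq
      exact hnE ((hWE _).2 (Or.inr (Or.inr (Or.inl rfl))))
    · have hspec := congrArg Walk.length (R.take_spec hd')
      rw [Walk.length_append] at hspec
      have htpos : (R.dropUntil d' hd').length ≠ 0 := fun h0 =>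
        hdq (Walk.eq_of_length_eq_zero h0)
      have hm := hmin p d' (R.takeUntil d' hd') hxp hadj
        (fun z hz => hRB z (R.support_takeUntil_subset hd' hz))
      omega
  have hchordR : ∀ c d, c ∈ R.support → d ∈ R.support → G.Adj c d →
      s(c, d) ∉ R.edges → False := by
    intro c d hc hd hadj hnotE
    have hspec := R.take_spec hc
    have hd2 : d ∈ (R.takeUntil c hc).support ∨ d ∈ (R.dropUntil c hc).support := by
      rw [← Walk.mem_support_append_iff, hspec]
      exact hd
    have hlenTD : (R.takeUntil c hc).length + (R.dropUntil c hc).length = R.length := by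
      have := congrArg Walk.length hspec
      rwa [Walk.length_append] at this
    rcases hd2 with hdT | hdD
    · -- d occurs before c
      have hlen3 : ((R.takeUntil c hc).takeUntil d hdT).length
          + ((R.takeUntil c hc).dropUntil d hdT).length = (R.takeUntil c hc).length := by
        have := congrArg Walk.length ((R.takeUntil c hc).take_spec hdT)
        rwa [Walk.length_append] at this
      have h0 : ((R.takeUntil c hc).dropUntil d hdT).length ≠ 0 := fun h0 =>
        hadj.ne (Walk.eq_of_length_eq_zero h0).symm
      have h1 : ((R.takeUntil c hc).dropUntil d hdT).length ≠ 1 := by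
        intro h1
        apply hnotE
        have := edge_of_length_one _ h1
        have h2 := Walk.edges_dropUntil_subset _ hdT this
        have h3 := Walk.edges_takeUntil_subset _ hc h2
        rwa [Sym2.eq_swap] at h3
      have hm := hmin p q (((R.takeUntil c hc).takeUntil d hdT).append
          (Walk.cons hadj.symm (R.dropUntil c hc))) hxp hyq ?_
      · rw [Walk.length_append, Walk.length_cons] at hm
        omega
      · intro z hz
        rw [Walk.mem_support_append_iff] at hz
        rcases hz with hz | hz
        · exact hRB z (R.support_takeUntil_subset hc
            ((R.takeUntil c hc).support_takeUntil_subset hdT hz))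
        · rw [Walk.support_cons, List.mem_cons] at hz
          rcases hz with rfl | hz
          · exact hRB z hd
          · exact hRB z (R.support_dropUntil_subset hc hz)
    · -- d occurs after c
      have hlen3 : ((R.dropUntil c hc).takeUntil d hdD).length
          + ((R.dropUntil c hc).dropUntil d hdD).length = (R.dropUntil c hc).length := by
        have := congrArg Walk.length ((R.dropUntil c hc).take_spec hdD)
        rwa [Walk.length_append] at this
      have h0 : ((R.dropUntil c hc).takeUntil d hdD).length ≠ 0 := fun h0 =>
        hadj.ne (Walk.eq_of_length_eq_zero h0)
      have h1 : ((R.dropUntil c hc).takeUntil d hdD).length ≠ 1 := by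
        intro h1
        apply hnotE
        have := edge_of_length_one _ h1
        have h2 := Walk.edges_takeUntil_subset _ hdD this
        exact Walk.edges_dropUntil_subset _ hc h2
      have hm := hmin p q ((R.takeUntil c hc).append
          (Walk.cons hadj ((R.dropUntil c hc).dropUntil d hdD))) hxp hyq ?_
      · rw [Walk.length_append, Walk.length_cons] at hm
        omega
      · intro z hz
        rw [Walk.mem_support_append_iff] at hz
        rcases hz with hz | hz
        · exact hRB z (R.support_takeUntil_subset hc hz)
        · rw [Walk.support_cons, List.mem_cons] at hz
          rcases hz with rfl | hz
          · exact hRB z hc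
          · exact hRB z (R.support_dropUntil_subset hc
              ((R.dropUntil c hc).support_dropUntil_subset hdD hz))
  -- apply chordality
  obtain ⟨c, d, hc, hd, hcd, hnE⟩ := hch x w hcyc hlen4
  have hnE4 : s(c, d) ∉ R.edges := fun h => hnE ((hWE _).2 (Or.inr (Or.inr (Or.inr (Or.inl h)))))
  rw [hWsupp] at hc hd
  rcases hc with rfl | rfl | rfl | hcR
  · rcases hd with rfl | rfl | rfl | hdR
    · exact hcd.ne rfl
    · exact hnE ((hWE _).2 (Or.inl rfl))
    · exact hxy hcd
    · exact hshort1 d hdR hcd hnE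
  · rcases hd with rfl | rfl | rfl | hdR
    · exact hnE ((hWE _).2 (Or.inl Sym2.eq_swap))
    · exact hcd.ne rfl
    · exact hnE ((hWE _).2 (Or.inr (Or.inl rfl)))
    · exact not_mem_sB_of_adj hcd (hRB d hdR)
  · rcases hd with rfl | rfl | rfl | hdR
    · exact hxy hcd.symm
    · exact hnE ((hWE _).2 (Or.inr (Or.inl Sym2.eq_swap)))
    · exact hcd.ne rfl
    · exact hshort2 d hdR hcd hnE
  · rcases hd with rfl | rfl | rfl | hdR
    · exact hshort1 c hcR hcd.symm (by rwa [Sym2.eq_swap] at hnE)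
    · exact not_mem_sB_of_adj hcd.symm (hRB c hcR)
    · exact hshort2 c hcR hcd.symm (by rwa [Sym2.eq_swap] at hnE)
    · exact hchordR c d hcR hdR hcd hnE4

end StrictChordalAux
namespace StrictChordalAux

variable {V : Type*} {G : SimpleGraph V} {a b : V}

lemma sS_isMinVtxSep (hne : a ≠ b) (hnadj : ¬ G.Adj a b) :
    G.IsMinVtxSep (sS G a b) :=
  ⟨a, b, hne, hnadj, sS_separates hne hnadj, sS_minimal hne hnadj⟩

end StrictChordalAux

open StrictChordalAux in
/-- In a finite connected strictly chordal graph, every critical clique is either the set of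
all simplicial vertices of some maximal clique, or a minimal vertex separator. -/
theorem criticalClique_structure {V : Type*} [Fintype V] (G : SimpleGraph V)
    (hconn : G.Connected) (hsc : G.IsStrictlyChordal) (C : Set V)
    (hC : G.IsCriticalClique C) :
    (∃ Q : Set V, G.IsMaxClique Q ∧ C = {v ∈ Q | G.IsSimplicialVtx v}) ∨
      G.IsMinVtxSep C := by
  obtain ⟨v, rfl⟩ := hC
  by_cases hsimp : G.IsSimplicialVtx v
  · -- simplicial case
    left
    have hQclique : G.IsClique (G.closedNbhd v) := by
      intro x hx y hy hxy
      rcases Set.mem_insert_iff.1 hx with rfl | hx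
      · rcases Set.mem_insert_iff.1 hy with rfl | hy
        · exact absurd rfl hxy
        · exact hy
      · rcases Set.mem_insert_iff.1 hy with rfl | hy
        · exact hx.symm
        · exact hsimp hx hy hxy
    have hQmax : ∀ Q', G.IsClique Q' → G.closedNbhd v ⊆ Q' → Q' = G.closedNbhd v := by
      intro Q' hQ' hsub
      apply Set.Subset.antisymm
      · intro w hw
        by_cases hwv : w = v
        · exact hwv ▸ Set.mem_insert _ _
        · exact Set.mem_insert_iff.2
            (Or.inr (hQ' (hsub (Set.mem_insert _ _)) hw (fun h => hwv h.symm)))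
      · exact hsub
    refine ⟨G.closedNbhd v, ⟨hQclique, hQmax⟩, ?_⟩
    ext u
    simp only [Set.mem_setOf_eq, Set.mem_sep_iff]
    constructor
    · intro hu
      refine ⟨?_, ?_⟩
      · rw [← hu]
        exact Set.mem_insert _ _
      · intro x hx y hy hxy
        refine hQclique ?_ ?_ hxy
        · rw [← hu]
          exact Set.mem_insert_iff.2 (Or.inr hx)
        · rw [← hu]
          exact Set.mem_insert_iff.2 (Or.inr hy)
    · rintro ⟨huQ, husimp⟩
      have hNu : G.IsClique (G.closedNbhd u) := by
        intro x hx y hy hxy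
        rcases Set.mem_insert_iff.1 hx with rfl | hx
        · rcases Set.mem_insert_iff.1 hy with rfl | hy
          · exact absurd rfl hxy
          · exact hy
        · rcases Set.mem_insert_iff.1 hy with rfl | hy
          · exact hx.symm
          · exact husimp hx hy hxy
      have hsub : G.closedNbhd v ⊆ G.closedNbhd u := by
        intro w hw
        by_cases hwu : w = u
        · exact hwu ▸ Set.mem_insert _ _
        · exact Set.mem_insert_iff.2 (Or.inr (hQclique huQ hw (fun h => hwu h.symm)))
      exact hQmax _ hNu hsub
  · -- non-simplicial case
    right
    have hab : ∃ a ∈ G.neighborSet v, ∃ b ∈ G.neighborSet v, a ≠ b ∧ ¬ G.Adj a b := by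
      by_contra hc
      push_neg at hc
      exact hsimp (fun x hx y hy hxy => hc x hx y hy hxy)
    obtain ⟨a, ha, b, hb, hne, hnadj⟩ := hab
    have hvS : v ∈ sS G a b := mem_sS_of_adj hne hnadj ha hb
    have key : ∀ s ∈ sS G a b, ∀ t ∈ sS G a b, ∀ w, G.Adj s w → w ∈ G.closedNbhd t := by
      intro s hs t ht w hsw
      by_contra hw
      rw [SimpleGraph.closedNbhd, Set.mem_insert_iff] at hw
      push_neg at hw
      obtain ⟨hwt, hwadj⟩ := hw
      have hst : s ≠ t := by
        rintro rfl
        exact hwadj hsw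
      have hadj_st : G.Adj s t := sS_clique hsc.1 hne hnadj s hs t ht hst
      have htw_ne : t ≠ w := fun h => hwt h.symm
      have hsmem : s ∈ sS G t w := mem_sS_of_adj htw_ne hwadj hadj_st hsw
      have htnot : t ∉ sS G t w := a_not_mem_sS
      have hSne : sS G a b ≠ sS G t w := fun h => htnot (h ▸ ht)
      have hdisj := hsc.2 _ _ (sS_isMinVtxSep hne hnadj) (sS_isMinVtxSep htw_ne hwadj) hSne
      exact (Set.disjoint_left.1 hdisj hs) hsmem
    have hclmem : ∀ s' ∈ sS G a b, ∀ t ∈ sS G a b, s' ∈ G.closedNbhd t := by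
      intro s' hs' t ht
      by_cases h : s' = t
      · exact h ▸ Set.mem_insert _ _
      · exact Set.mem_insert_iff.2
          (Or.inr (sS_clique hsc.1 hne hnadj t ht s' hs' (Ne.symm h)))
    have hCS : {u | G.closedNbhd u = G.closedNbhd v} = sS G a b := by
      apply Set.Subset.antisymm
      · intro u hu
        have huset : G.closedNbhd u = G.closedNbhd v := hu
        have hua : G.Adj u a := by
          have haNv : a ∈ G.closedNbhd v := Set.mem_insert_iff.2 (Or.inr ha)
          rw [← huset] at haNv
          rcases Set.mem_insert_iff.1 haNv with rfl | h
          · exfalso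
            have hbNv : b ∈ G.closedNbhd v := Set.mem_insert_iff.2 (Or.inr hb)
            rw [← huset] at hbNv
            rcases Set.mem_insert_iff.1 hbNv with rfl | h
            · exact hne rfl
            · exact hnadj h
          · exact h
        have hub : G.Adj u b := by
          have hbNv : b ∈ G.closedNbhd v := Set.mem_insert_iff.2 (Or.inr hb)
          rw [← huset] at hbNv
          rcases Set.mem_insert_iff.1 hbNv with rfl | h
          · exfalso
            have haNv : a ∈ G.closedNbhd v := Set.mem_insert_iff.2 (Or.inr ha)
            rw [← huset] at haNv
            rcases Set.mem_insert_iff.1 haNv with rfl | h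
            · exact hne rfl
            · exact hnadj h.symm
          · exact h
        exact mem_sS_of_adj hne hnadj hua hub
      · intro s hs
        show G.closedNbhd s = G.closedNbhd v
        apply Set.Subset.antisymm
        · intro w hwmem
          rcases Set.mem_insert_iff.1 hwmem with h' | h
          · rw [h']
            exact hclmem s hs v hvS
          · exact key s hs v hvS w h
        · intro w hwmem
          rcases Set.mem_insert_iff.1 hwmem with h' | h
          · rw [h']
            exact hclmem v hvS s hs
          · exact key v hvS s hs w h
    rw [hCS]
    exact sS_isMinVtxSep hne hnadj
end

section
/- Let G be a finite connected non-complete strictly interval graph. Then every maximal clique Q of G contains at most two minimal vertex separators of G, i.e., the number of minimal vertex separators S of G with S ⊆ Q is at most 2. -/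
/-- An interval graph. -/
def SimpleGraph.IsIntervalGraph {V : Type*} (G : SimpleGraph V) : Prop :=
  ∃ a b : V → ℝ, (∀ v, a v ≤ b v) ∧
    ∀ u v : V, u ≠ v →
      (G.Adj u v ↔ (Set.Icc (a u) (b u) ∩ Set.Icc (a v) (b v)).Nonempty)

namespace TwoSepAux

open SimpleGraph Set

variable {V : Type*} {G : SimpleGraph V}

/-- Vertices reachable from `u` by walks avoiding `S`. -/
def Reach (G : SimpleGraph V) (S : Set V) (u : V) : Set V :=
  {x | ∃ w : G.Walk u x, ∀ y ∈ w.support, y ∉ S}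

lemma reach_self {S : Set V} {u : V} (h : u ∉ S) : u ∈ Reach G S u :=
  ⟨SimpleGraph.Walk.nil, by simp [h]⟩

lemma reach_not_mem {S : Set V} {u x : V} (h : x ∈ Reach G S u) : x ∉ S := by
  obtain ⟨w, hw⟩ := h; exact hw x w.end_mem_support

lemma reach_adj {S : Set V} {u x y : V} (hx : x ∈ Reach G S u) (hxy : G.Adj x y)
    (hy : y ∉ S) : y ∈ Reach G S u := by
  obtain ⟨w, hw⟩ := hx
  refine ⟨w.concat hxy, ?_⟩
  intro z hz
  rw [SimpleGraph.Walk.support_concat, List.mem_append] at hz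
  rcases hz with hz | hz
  · exact hw z hz
  · simp at hz; subst hz; exact hy

lemma reach_mono_adj {S : Set V} {u u' : V} (hu : u ∉ S) (h : G.Adj u u') :
    Reach G S u' ⊆ Reach G S u := by
  rintro x ⟨w, hw⟩
  refine ⟨SimpleGraph.Walk.cons h w, ?_⟩
  intro z hz
  rw [SimpleGraph.Walk.support_cons, List.mem_cons] at hz
  rcases hz with rfl | hz
  · exact hu
  · exact hw z hz

lemma support_subset_reach {S : Set V} {u x : V} (w : G.Walk u x)
    (hw : ∀ y ∈ w.support, y ∉ S) : ∀ z ∈ w.support, z ∈ Reach G S u := by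
  induction w with
  | nil => intro z hz; simp at hz; subst hz; exact reach_self (hw _ (by simp))
  | @cons u c x h q ih =>
    intro z hz
    have hu : u ∉ S := hw u (by simp)
    rw [SimpleGraph.Walk.support_cons, List.mem_cons] at hz
    rcases hz with rfl | hz
    · exact reach_self hu
    · exact reach_mono_adj hu h (ih (fun y hy => hw y (by rw [SimpleGraph.Walk.support_cons]; exact List.mem_cons_of_mem _ hy)) z hz)

lemma exists_adj_reach {S : Set V} {u v s : V} (w : G.Walk u v)
    (hu : u ∉ S) (hs : s ∈ S) (hsupp : ∀ x ∈ w.support, x ∈ S → x = s)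
    (hsw : s ∈ w.support) : ∃ z ∈ Reach G S u, G.Adj z s := by
  induction w with
  | nil =>
    simp at hsw; subst hsw; exact absurd hs hu
  | @cons u c x h q ih =>
    rw [SimpleGraph.Walk.support_cons, List.mem_cons] at hsw
    rcases hsw with rfl | hsw
    · exact absurd hs hu
    · by_cases hc : c = s
      · subst hc; exact ⟨u, reach_self hu, h⟩
      · have hcS : c ∉ S := fun hcS => hc (hsupp c (by simp) hcS)
        obtain ⟨z, hz, hzs⟩ := ih hcS
          (fun x hx hxS => hsupp x (by rw [SimpleGraph.Walk.support_cons]; exact List.mem_cons_of_mem _ hx) hxS) hsw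
        exact ⟨z, reach_mono_adj hu h hz, hzs⟩

lemma side_walk {a b : V → ℝ} {p : ℝ}
    (hadj : ∀ x y : V, G.Adj x y → ∃ t, a x ≤ t ∧ t ≤ b x ∧ a y ≤ t ∧ t ≤ b y)
    {x y : V} (w : G.Walk x y) (hsupp : ∀ z ∈ w.support, p < a z ∨ b z < p)
    (hx : b x < p) : b y < p := by
  induction w with
  | nil => exact hx
  | @cons x c y h q ih =>
    obtain ⟨t, h1, h2, h3, h4⟩ := hadj x c h
    have hc : p < a c ∨ b c < p := hsupp c (by simp)
    have hbc : b c < p := by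
      rcases hc with hc | hc
      · linarith
      · exact hc
    exact ih (fun z hz => hsupp z (by rw [SimpleGraph.Walk.support_cons]; exact List.mem_cons_of_mem _ hz)) hbc


lemma sep_nonempty (hconn : G.Connected) {S : Set V} (hS : G.IsMinVtxSep S) :
    S.Nonempty := by
  obtain ⟨u, v, huv, _, ⟨hu, hv, hsep⟩, _⟩ := hS
  obtain ⟨w⟩ := hconn.preconnected u v
  obtain ⟨x, _, hxS⟩ := hsep w
  exact ⟨x, hxS⟩

lemma sep_side {a b : V → ℝ} {p : ℝ} {Q S : Set V}
    (hab : ∀ v, a v ≤ b v)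
    (hadj : ∀ x y : V, G.Adj x y → ∃ t, a x ≤ t ∧ t ≤ b x ∧ a y ≤ t ∧ t ≤ b y)
    (hQ : ∀ x, x ∈ Q ↔ a x ≤ p ∧ p ≤ b x)
    (hclQ : G.IsClique Q)
    (hS : G.IsMinVtxSep S) (hSQ : S ⊆ Q) :
    ∃ C : Set V, C.Nonempty ∧ (∀ x ∈ C, x ∉ Q) ∧
      (∀ s ∈ S, ∃ z ∈ C, G.Adj s z) ∧
      (∀ x ∈ C, ∀ y, G.Adj x y → y ∉ S → y ∈ C) ∧
      ((∀ x ∈ C, p < a x) ∨ (∀ x ∈ C, b x < p)) := by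
  obtain ⟨u, v, huv, hnadj, ⟨hu, hv, hsep⟩, hmin⟩ := hS
  have hdisj : ∀ x, x ∈ Reach G S u → x ∈ Reach G S v → False := by
    rintro x ⟨w1, hw1⟩ ⟨w2, hw2⟩
    obtain ⟨z, hz, hzS⟩ := hsep (w1.append w2.reverse)
    rw [SimpleGraph.Walk.mem_support_append_iff] at hz
    rcases hz with hz | hz
    · exact hw1 z hz hzS
    · rw [SimpleGraph.Walk.support_reverse, List.mem_reverse] at hz
      exact hw2 z hz hzS
  have key : (∀ x ∈ Reach G S u, x ∉ Q) ∨ (∀ x ∈ Reach G S v, x ∉ Q) := by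
    by_contra hcon
    push_neg at hcon
    obtain ⟨⟨x, hxCu, hxQ⟩, ⟨y, hyCv, hyQ⟩⟩ := hcon
    have hxy : x ≠ y := fun h => hdisj x hxCu (h ▸ hyCv)
    have hadjxy : G.Adj x y := hclQ hxQ hyQ hxy
    exact hdisj y (reach_adj hxCu hadjxy (reach_not_mem hyCv)) hyCv
  have hnb : ∀ s ∈ S, (∃ z ∈ Reach G S u, G.Adj s z) ∧ (∃ z ∈ Reach G S v, G.Adj s z) := by
    intro s hsS
    have hss : ¬ G.IsUVSeparator u v (S \ {s}) :=
      hmin _ (Set.sdiff_singleton_ssubset.mpr hsS)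
    rw [SimpleGraph.IsUVSeparator] at hss
    push_neg at hss
    obtain ⟨w, hw⟩ := hss (fun h => hu h.1) (fun h => hv h.1)
    have hsupp : ∀ x ∈ w.support, x ∈ S → x = s := by
      intro x hx hxS
      by_contra hne
      exact hw x hx ⟨hxS, hne⟩
    have hsw : s ∈ w.support := by
      obtain ⟨x, hx, hxS⟩ := hsep w
      rwa [hsupp x hx hxS] at hx
    obtain ⟨z1, hz1, h1⟩ := exists_adj_reach w hu hsS hsupp hsw
    obtain ⟨z2, hz2, h2⟩ := exists_adj_reach w.reverse hv hsS
      (fun x hx => hsupp x (by rwa [SimpleGraph.Walk.support_reverse, List.mem_reverse] at hx))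
      (by rwa [SimpleGraph.Walk.support_reverse, List.mem_reverse])
    exact ⟨⟨z1, hz1, h1.symm⟩, ⟨z2, hz2, h2.symm⟩⟩
  have main : ∀ w0 : V, w0 ∉ S → (∀ x ∈ Reach G S w0, x ∉ Q) →
      (∀ s ∈ S, ∃ z ∈ Reach G S w0, G.Adj s z) →
      ∃ C : Set V, C.Nonempty ∧ (∀ x ∈ C, x ∉ Q) ∧
        (∀ s ∈ S, ∃ z ∈ C, G.Adj s z) ∧
        (∀ x ∈ C, ∀ y, G.Adj x y → y ∉ S → y ∈ C) ∧
        ((∀ x ∈ C, p < a x) ∨ (∀ x ∈ C, b x < p)) := by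
    intro w0 hw0 hCQ hnb0
    have hside : ∀ x ∈ Reach G S w0, p < a x ∨ b x < p := by
      intro x hx
      have hxQ := hCQ x hx
      rw [hQ] at hxQ
      by_contra hcon
      push_neg at hcon
      exact hxQ ⟨hcon.1, hcon.2⟩
    refine ⟨Reach G S w0, ⟨w0, reach_self hw0⟩, hCQ, hnb0,
      fun x hx y hxy hy => reach_adj hx hxy hy, ?_⟩
    rcases hside w0 (reach_self hw0) with h0 | h0
    · left
      intro x hx
      rcases hside x hx with h1 | h1
      · exact h1
      · exfalso
        obtain ⟨w, hw⟩ := hx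
        have hrev : ∀ z ∈ w.reverse.support, p < a z ∨ b z < p := by
          intro z hz
          rw [SimpleGraph.Walk.support_reverse, List.mem_reverse] at hz
          exact hside z (support_subset_reach w hw z hz)
        have := side_walk hadj w.reverse hrev h1
        have := hab w0
        linarith
    · right
      intro x hx
      obtain ⟨w, hw⟩ := hx
      exact side_walk hadj w (fun z hz => hside z (support_subset_reach w hw z hz)) h0
  rcases key with h | h
  · exact main u hu h (fun s hs => (hnb s hs).1)
  · exact main v hv h (fun s hs => (hnb s hs).2)


lemma core_right {a b : V → ℝ} {p : ℝ} {Q S1 S2 C1 C2 : Set V} {x2 : V}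
    (hab : ∀ v, a v ≤ b v)
    (hadjiff : ∀ x y : V, x ≠ y →
      (G.Adj x y ↔ (Set.Icc (a x) (b x) ∩ Set.Icc (a y) (b y)).Nonempty))
    (hQ : ∀ x, x ∈ Q ↔ a x ≤ p ∧ p ≤ b x)
    (hS1ne : S1.Nonempty) (hS1Q : S1 ⊆ Q) (hdisj : Disjoint S1 S2)
    (hnb1 : ∀ s ∈ S1, ∃ z ∈ C1, G.Adj s z)
    (hC2Q : ∀ x ∈ C2, x ∉ Q)
    (hC2cl : ∀ x ∈ C2, ∀ y, G.Adj x y → y ∉ S2 → y ∈ C2)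
    (hC2r : ∀ x ∈ C2, p < a x)
    (hx2 : x2 ∈ C2) (hmin : ∀ z ∈ C1, a x2 ≤ a z) : False := by
  obtain ⟨s1, hs1⟩ := hS1ne
  obtain ⟨z, hz, hadj1⟩ := hnb1 s1 hs1
  have hs1Q := hS1Q hs1
  obtain ⟨haq, hqb⟩ := (hQ s1).mp hs1Q
  obtain ⟨t, ht⟩ := (hadjiff s1 z hadj1.ne).mp hadj1
  simp only [Set.mem_inter_iff, Set.mem_Icc] at ht
  have h1 : a z ≤ b s1 := le_trans ht.2.1 ht.1.2
  have h2 : a x2 ≤ a z := hmin z hz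
  have hpx2 : p < a x2 := hC2r x2 hx2
  have hne2 : s1 ≠ x2 := fun h => hC2Q x2 hx2 (h ▸ hs1Q)
  have hadj2 : G.Adj s1 x2 := (hadjiff s1 x2 hne2).mpr
    ⟨a x2, by simp only [Set.mem_inter_iff, Set.mem_Icc]
              exact ⟨⟨by linarith, by linarith⟩, le_refl _, hab x2⟩⟩
  have hs1S2 : s1 ∉ S2 := Set.disjoint_left.mp hdisj hs1
  exact hC2Q s1 (hC2cl x2 hx2 s1 hadj2.symm hs1S2) hs1Q

lemma core_left {a b : V → ℝ} {p : ℝ} {Q S1 S2 C1 C2 : Set V} {x2 : V}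
    (hab : ∀ v, a v ≤ b v)
    (hadjiff : ∀ x y : V, x ≠ y →
      (G.Adj x y ↔ (Set.Icc (a x) (b x) ∩ Set.Icc (a y) (b y)).Nonempty))
    (hQ : ∀ x, x ∈ Q ↔ a x ≤ p ∧ p ≤ b x)
    (hS1ne : S1.Nonempty) (hS1Q : S1 ⊆ Q) (hdisj : Disjoint S1 S2)
    (hnb1 : ∀ s ∈ S1, ∃ z ∈ C1, G.Adj s z)
    (hC2Q : ∀ x ∈ C2, x ∉ Q)
    (hC2cl : ∀ x ∈ C2, ∀ y, G.Adj x y → y ∉ S2 → y ∈ C2)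
    (hC2l : ∀ x ∈ C2, b x < p)
    (hx2 : x2 ∈ C2) (hmax : ∀ z ∈ C1, b z ≤ b x2) : False := by
  obtain ⟨s1, hs1⟩ := hS1ne
  obtain ⟨z, hz, hadj1⟩ := hnb1 s1 hs1
  have hs1Q := hS1Q hs1
  obtain ⟨haq, hqb⟩ := (hQ s1).mp hs1Q
  obtain ⟨t, ht⟩ := (hadjiff s1 z hadj1.ne).mp hadj1
  simp only [Set.mem_inter_iff, Set.mem_Icc] at ht
  have h1 : a s1 ≤ b z := le_trans ht.1.1 ht.2.2
  have h2 : b z ≤ b x2 := hmax z hz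
  have hpx2 : b x2 < p := hC2l x2 hx2
  have hne2 : s1 ≠ x2 := fun h => hC2Q x2 hx2 (h ▸ hs1Q)
  have hadj2 : G.Adj s1 x2 := (hadjiff s1 x2 hne2).mpr
    ⟨b x2, by simp only [Set.mem_inter_iff, Set.mem_Icc]
              exact ⟨⟨by linarith, by linarith⟩, hab x2, le_refl _⟩⟩
  have hs1S2 : s1 ∉ S2 := Set.disjoint_left.mp hdisj hs1
  exact hC2Q s1 (hC2cl x2 hx2 s1 hadj2.symm hs1S2) hs1Q

end TwoSepAux

open TwoSepAux in
/-- In a finite connected non-complete strictly interval graph, every maximal clique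
contains at most two minimal vertex separators. -/
theorem maxClique_at_most_two_minVtxSep {V : Type*} [Fintype V] (G : SimpleGraph V)
    (hconn : G.Connected) (hnc : ∃ u v : V, u ≠ v ∧ ¬ G.Adj u v)
    (hsc : G.IsStrictlyChordal) (hint : G.IsIntervalGraph)
    (Q : Set V) (hQ : G.IsMaxClique Q) :
    {S : Set V | G.IsMinVtxSep S ∧ S ⊆ Q}.encard ≤ 2 := by
  classical
  obtain ⟨a, b, hab, hadjiff⟩ := hint
  have hadj : ∀ x y : V, G.Adj x y → ∃ t, a x ≤ t ∧ t ≤ b x ∧ a y ≤ t ∧ t ≤ b y := by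
    intro x y hxy
    obtain ⟨t, ht⟩ := (hadjiff x y hxy.ne).mp hxy
    simp only [Set.mem_inter_iff, Set.mem_Icc] at ht
    exact ⟨t, ht.1.1, ht.1.2, ht.2.1, ht.2.2⟩
  -- Q is nonempty
  obtain ⟨u0, v0, hne0, _⟩ := hnc
  have hQne : Q.Nonempty := by
    rcases Set.eq_empty_or_nonempty Q with h | h
    · exfalso
      have h1 : ({u0} : Set V) = Q :=
        hQ.2 {u0} (Set.pairwise_singleton u0 G.Adj) (h ▸ Set.empty_subset _)
      rw [← h1] at h
      exact Set.singleton_ne_empty u0 h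
    · exact h
  -- the clique point p
  obtain ⟨x0, hx0Q, hx0max⟩ := Set.exists_max_image Q a (Set.toFinite Q) hQne
  set p := a x0 with hp
  have hQmem : ∀ x ∈ Q, a x ≤ p ∧ p ≤ b x := by
    intro x hx
    refine ⟨hx0max x hx, ?_⟩
    by_cases hxx : x = x0
    · subst hxx; exact hab x
    · obtain ⟨t, ht1, ht2, ht3, ht4⟩ := hadj x0 x (hQ.1 hx0Q hx (Ne.symm hxx))
      linarith
  have hQiff : ∀ x, x ∈ Q ↔ a x ≤ p ∧ p ≤ b x := by
    intro x
    constructor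
    · exact hQmem x
    · rintro ⟨h1, h2⟩
      have hcl : G.IsClique (insert x Q) := by
        intro y hy z hz hyz
        have hyp : a y ≤ p ∧ p ≤ b y := by
          rcases Set.mem_insert_iff.mp hy with rfl | hy'
          · exact ⟨h1, h2⟩
          · exact hQmem y hy'
        have hzp : a z ≤ p ∧ p ≤ b z := by
          rcases Set.mem_insert_iff.mp hz with rfl | hz'
          · exact ⟨h1, h2⟩
          · exact hQmem z hz'
        refine (hadjiff y z hyz).mpr ⟨p, ?_⟩
        simp only [Set.mem_inter_iff, Set.mem_Icc]
        exact ⟨hyp, hzp⟩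
      have := hQ.2 (insert x Q) hcl (Set.subset_insert x Q)
      rw [← this]
      exact Set.mem_insert x Q
  -- the right- and left-sided separator families
  set R : Set (Set V) := {S | (G.IsMinVtxSep S ∧ S ⊆ Q) ∧
    ∃ C : Set V, C.Nonempty ∧ (∀ x ∈ C, x ∉ Q) ∧ (∀ s ∈ S, ∃ z ∈ C, G.Adj s z) ∧
      (∀ x ∈ C, ∀ y, G.Adj x y → y ∉ S → y ∈ C) ∧ (∀ x ∈ C, p < a x)} with hR
  set L : Set (Set V) := {S | (G.IsMinVtxSep S ∧ S ⊆ Q) ∧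
    ∃ C : Set V, C.Nonempty ∧ (∀ x ∈ C, x ∉ Q) ∧ (∀ s ∈ S, ∃ z ∈ C, G.Adj s z) ∧
      (∀ x ∈ C, ∀ y, G.Adj x y → y ∉ S → y ∈ C) ∧ (∀ x ∈ C, b x < p)} with hL
  have hsub : {S : Set V | G.IsMinVtxSep S ∧ S ⊆ Q} ⊆ R ∪ L := by
    rintro S ⟨hS, hSQ⟩
    obtain ⟨C, hCne, hCQ, hCnb, hCcl, hside⟩ := sep_side hab hadj hQiff hQ.1 hS hSQ
    rcases hside with hside | hside
    · exact Or.inl ⟨⟨hS, hSQ⟩, C, hCne, hCQ, hCnb, hCcl, hside⟩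
    · exact Or.inr ⟨⟨hS, hSQ⟩, C, hCne, hCQ, hCnb, hCcl, hside⟩
  have hRone : R.encard ≤ 1 := by
    rw [Set.encard_le_one_iff]
    rintro S1 S2 hS1 hS2
    by_contra hne
    obtain ⟨⟨hm1, hq1⟩, C1, hC1ne, hC1Q, hC1nb, hC1cl, hC1r⟩ := hS1
    obtain ⟨⟨hm2, hq2⟩, C2, hC2ne, hC2Q, hC2nb, hC2cl, hC2r⟩ := hS2
    have hdisj : Disjoint S1 S2 := hsc.2 _ _ hm1 hm2 hne
    obtain ⟨x2, hx2, hx2min⟩ :=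
      Set.exists_min_image (C1 ∪ C2) a (Set.toFinite _) (hC1ne.mono Set.subset_union_left)
    rcases hx2 with hx2 | hx2
    · exact core_right hab hadjiff hQiff (sep_nonempty hconn hm2) hq2 hdisj.symm hC2nb
        hC1Q hC1cl hC1r hx2 (fun z hz => hx2min z (Or.inr hz))
    · exact core_right hab hadjiff hQiff (sep_nonempty hconn hm1) hq1 hdisj hC1nb
        hC2Q hC2cl hC2r hx2 (fun z hz => hx2min z (Or.inl hz))
  have hLone : L.encard ≤ 1 := by
    rw [Set.encard_le_one_iff]
    rintro S1 S2 hS1 hS2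
    by_contra hne
    obtain ⟨⟨hm1, hq1⟩, C1, hC1ne, hC1Q, hC1nb, hC1cl, hC1l⟩ := hS1
    obtain ⟨⟨hm2, hq2⟩, C2, hC2ne, hC2Q, hC2nb, hC2cl, hC2l⟩ := hS2
    have hdisj : Disjoint S1 S2 := hsc.2 _ _ hm1 hm2 hne
    obtain ⟨x2, hx2, hx2max⟩ :=
      Set.exists_max_image (C1 ∪ C2) b (Set.toFinite _) (hC1ne.mono Set.subset_union_left)
    rcases hx2 with hx2 | hx2
    · exact core_left hab hadjiff hQiff (sep_nonempty hconn hm2) hq2 hdisj.symm hC2nb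
        hC1Q hC1cl hC1l hx2 (fun z hz => hx2max z (Or.inr hz))
    · exact core_left hab hadjiff hQiff (sep_nonempty hconn hm1) hq1 hdisj hC1nb
        hC2Q hC2cl hC2l hx2 (fun z hz => hx2max z (Or.inl hz))
  calc {S : Set V | G.IsMinVtxSep S ∧ S ⊆ Q}.encard ≤ (R ∪ L).encard :=
        Set.encard_mono hsub
    _ ≤ R.encard + L.encard := Set.encard_union_le R L
    _ ≤ 1 + 1 := add_le_add hRone hLone
    _ = 2 := by norm_num
end
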